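/- arXiv:2004.05721 — 3 statements merged into one kernel-verified Lean document; each statement's English description precedes it below -/
import Mathlib

section
/- There is an absolute constant C > 0 with the following property. For every weighted directed graph G = (V,E,W) with n ≥ 2 vertices, every source vertex set S ⊆ V of size s ≥ 2, every integer k > 1, and every real R > 0, there exists an S-sourcewise (C·k·log n, R)-cover of G in which every vertex of V is contained in at most C·s^{1/k}·log n balls. -/
open scoped ENNReal

noncomputable section

/-- The cost (total weight) of a walk, given as a list of consecutively visited
vertices, where weights are coerced into `ℝ≥0∞`. -/
def walkCost {V : Type*} (W : V × V → ℝ) : List V → ℝ≥0∞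
  | [] => 0
  | [_] => 0
  | a :: b :: l => ENNReal.ofReal (W (a, b)) + walkCost W (b :: l)

/-- `l` is (the list of vertices of) a directed walk from `u` to `v` in the
digraph with edge set `E`. -/
def IsWalk {V : Type*} (E : Set (V × V)) (u v : V) (l : List V) : Prop :=
  l.Chain' (fun a b => (a, b) ∈ E) ∧ l.head? = some u ∧ l.getLast? = some v

/-- The shortest-path distance from `u` to `v` in the digraph with edge set `E`
and weight function `W` (equal to `∞` if there is no directed path). -/
def gdist {V : Type*} (E : Set (V × V)) (W : V × V → ℝ) (u v : V) : ℝ≥0∞ :=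
  ⨅ (l : List V) (_ : IsWalk E u v l), walkCost W l

/-- The round-trip distance between `u` and `v`. -/
def rtdist {V : Type*} (E : Set (V × V)) (W : V × V → ℝ) (u v : V) : ℝ≥0∞ :=
  gdist E W u v + gdist E W v u

/-- The round-trip distance between `u` and `v` in the subgraph induced by the
vertex set `B`. -/
def inducedRtdist {V : Type*} (E : Set (V × V)) (W : V × V → ℝ) (B : Set V)
    (u v : V) : ℝ≥0∞ :=
  rtdist (E ∩ B ×ˢ B) W u v


namespace RTCover

set_option linter.unusedSectionVars false

variable {V : Type*} {E E' : Set (V × V)} {W : V × V → ℝ}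

lemma isWalk_singleton (E : Set (V × V)) (u : V) : IsWalk E u u [u] :=
  ⟨List.isChain_singleton u, rfl, rfl⟩

lemma gdist_le {u v : V} {l : List V} (h : IsWalk E u v l) :
    gdist E W u v ≤ walkCost W l := iInf₂_le l h

lemma gdist_self (E : Set (V × V)) (W : V × V → ℝ) (u : V) : gdist E W u u = 0 :=
  le_antisymm (by simpa [walkCost] using gdist_le (W := W) (isWalk_singleton E u)) zero_le

lemma exists_walk_of_lt {u v : V} {c : ℝ≥0∞} (h : gdist E W u v < c) :
    ∃ l, IsWalk E u v l ∧ walkCost W l < c := by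
  simpa [gdist, iInf_lt_iff] using h

lemma IsWalk.mono (h : E ⊆ E') {u v : V} {l : List V} (hw : IsWalk E u v l) :
    IsWalk E' u v l :=
  ⟨hw.1.imp (fun _ _ hab => h hab), hw.2.1, hw.2.2⟩

lemma mem_of_head? {α : Type*} {l : List α} {a : α} (h : l.head? = some a) : a ∈ l := by
  cases l with
  | nil => simp at h
  | cons x t => simp at h; subst h; exact List.mem_cons_self

lemma mem_of_getLast? {α : Type*} : ∀ {l : List α} {a : α}, l.getLast? = some a → a ∈ l
  | [], a => by simp
  | [x], a => by
      intro h
      simp only [List.getLast?_singleton, Option.some.injEq] at h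
      subst h; exact List.mem_singleton_self _
  | x :: y :: t, a => by
      rw [List.getLast?_cons_cons]
      intro h
      exact List.mem_cons_of_mem _ (mem_of_getLast? h)

lemma walk_fst_mem {u v : V} {l : List V} (h : IsWalk E u v l) : u ∈ l :=
  mem_of_head? h.2.1

lemma walk_snd_mem {u v : V} {l : List V} (h : IsWalk E u v l) : v ∈ l :=
  mem_of_getLast? h.2.2

lemma walkCost_append (W : V × V → ℝ) :
    ∀ (l₁ l₂ : List V) (v : V), l₁.getLast? = some v → l₂.head? = some v →
      walkCost W (l₁ ++ l₂.tail) = walkCost W l₁ + walkCost W l₂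
  | [], l₂, v => by simp
  | [a], l₂, v => by
      intro h1 h2
      simp only [List.getLast?_singleton, Option.some.injEq] at h1
      subst h1
      cases l₂ with
      | nil => simp at h2
      | cons x t =>
          simp only [List.head?_cons, Option.some.injEq] at h2
          subst h2
          simp [walkCost]
  | a :: b :: t, l₂, v => by
      intro h1 h2
      rw [List.getLast?_cons_cons] at h1
      have IH := walkCost_append W (b :: t) l₂ v h1 h2
      show ENNReal.ofReal (W (a, b)) + walkCost W ((b :: t) ++ l₂.tail) =
        (ENNReal.ofReal (W (a, b)) + walkCost W (b :: t)) + walkCost W l₂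
      rw [IH, add_assoc]

lemma IsWalk.append {u v w : V} {l₁ l₂ : List V}
    (h₁ : IsWalk E u v l₁) (h₂ : IsWalk E v w l₂) : IsWalk E u w (l₁ ++ l₂.tail) := by
  obtain ⟨c₁, hh₁, hl₁⟩ := h₁
  obtain ⟨c₂, hh₂, hl₂⟩ := h₂
  cases l₂ with
  | nil => simp at hh₂
  | cons x t =>
      simp only [List.head?_cons, Option.some.injEq] at hh₂
      subst hh₂
      cases t with
      | nil =>
          simp only [List.getLast?_singleton, Option.some.injEq] at hl₂
          subst hl₂
          simpa using ⟨c₁, hh₁, hl₁⟩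
      | cons y t' =>
          rw [List.getLast?_cons_cons] at hl₂
          have hc2 := List.isChain_cons_cons.mp c₂
          refine ⟨?_, ?_, ?_⟩
          · show List.IsChain _ _; rw [List.isChain_append]
            exact ⟨c₁, hc2.2, by
              intro p hp q hq
              rw [hl₁] at hp
              simp only [Option.mem_def, Option.some.injEq] at hp
              simp only [List.tail_cons, List.head?_cons, Option.mem_def, Option.some.injEq] at hq
              subst hp; subst hq
              exact hc2.1⟩
          · cases l₁ with
            | nil => simp at hh₁
            | cons z s => simpa using hh₁
          · rw [List.getLast?_append_of_ne_nil l₁ (by simp)]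
            exact hl₂

lemma gdist_triangle (E : Set (V × V)) (W : V × V → ℝ) (u v w : V) :
    gdist E W u w ≤ gdist E W u v + gdist E W v w := by
  by_cases h1 : gdist E W u v = ⊤
  · simp [h1]
  by_cases h2 : gdist E W v w = ⊤
  · simp [h2]
  refine ENNReal.le_of_forall_pos_le_add fun ε hε _ => ?_
  have hε2 : ((ε : ℝ≥0∞) / 2) ≠ 0 := by
    simp [ENNReal.div_eq_zero_iff]
    exact_mod_cast hε.ne'
  obtain ⟨l₁, hw₁, hc₁⟩ := exists_walk_of_lt (W := W)
    (ENNReal.lt_add_right h1 hε2)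
  obtain ⟨l₂, hw₂, hc₂⟩ := exists_walk_of_lt (W := W)
    (ENNReal.lt_add_right h2 hε2)
  have happ := IsWalk.append hw₁ hw₂
  have hcost : walkCost W (l₁ ++ l₂.tail) = walkCost W l₁ + walkCost W l₂ :=
    walkCost_append W l₁ l₂ v hw₁.2.2 hw₂.2.1
  calc gdist E W u w ≤ walkCost W (l₁ ++ l₂.tail) := gdist_le happ
    _ = walkCost W l₁ + walkCost W l₂ := hcost
    _ ≤ (gdist E W u v + ε / 2) + (gdist E W v w + ε / 2) :=
        add_le_add hc₁.le hc₂.le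
    _ = gdist E W u v + gdist E W v w + ((ε : ℝ≥0∞) / 2 + ε / 2) := by
        ring
    _ = gdist E W u v + gdist E W v w + ε := by
        rw [ENNReal.add_halves]

lemma isWalk_pair {a b : V} (h : (a, b) ∈ E) : IsWalk E a b [a, b] :=
  ⟨List.isChain_cons_cons.mpr ⟨h, List.isChain_singleton b⟩, rfl, rfl⟩

lemma gdist_le_edge {a b : V} (h : (a, b) ∈ E) :
    gdist E W a b ≤ ENNReal.ofReal (W (a, b)) := by
  simpa [walkCost] using gdist_le (W := W) (isWalk_pair h)

lemma gdist_add_gdist_le :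
    ∀ (l : List V) (u v x : V), IsWalk E u v l → x ∈ l →
      gdist E W u x + gdist E W x v ≤ walkCost W l
  | [], u, v, x => by intro h hx; simp at hx
  | [a], u, v, x => by
      intro h hx
      obtain ⟨_, h2, h3⟩ := h
      simp only [List.head?_cons, Option.some.injEq] at h2
      simp only [List.getLast?_singleton, Option.some.injEq] at h3
      simp only [List.mem_singleton] at hx
      subst h2; subst h3; subst hx
      simp [gdist_self, walkCost]
  | a :: b :: t, u, v, x => by
      intro h hx
      obtain ⟨hc, hh, hl⟩ := h
      simp only [List.head?_cons, Option.some.injEq] at hh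
      subst hh
      obtain ⟨hab, hc'⟩ := List.isChain_cons_cons.mp hc
      rw [List.getLast?_cons_cons] at hl
      have hw : IsWalk E b v (b :: t) := ⟨hc', rfl, hl⟩
      rcases List.mem_cons.mp hx with hxa | hxt
      · subst hxa
        have : gdist E W x v ≤ walkCost W (x :: b :: t) :=
          gdist_le ⟨hc, rfl, by rw [List.getLast?_cons_cons]; exact hl⟩
        simpa [gdist_self] using this
      · have IH := gdist_add_gdist_le (b :: t) b v x hw hxt
        calc gdist E W a x + gdist E W x v
            ≤ (gdist E W a b + gdist E W b x) + gdist E W x v :=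
              add_le_add_left (gdist_triangle E W a b x) _
          _ ≤ (ENNReal.ofReal (W (a, b)) + gdist E W b x) + gdist E W x v :=
              add_le_add_left (add_le_add_left (gdist_le_edge hab) _) _
          _ = ENNReal.ofReal (W (a, b)) + (gdist E W b x + gdist E W x v) := by
              rw [add_assoc]
          _ ≤ ENNReal.ofReal (W (a, b)) + walkCost W (b :: t) := add_le_add_right IH _
          _ = walkCost W (a :: b :: t) := rfl

lemma walk_mem_of_subset {s : Set V} (hE : E ⊆ s ×ˢ s) :
    ∀ (l : List V) (u v x : V), IsWalk E u v l → x ∈ l → x = u ∨ x ∈ s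
  | [], u, v, x => by intro h hx; simp at hx
  | [a], u, v, x => by
      intro h hx
      simp only [List.mem_singleton] at hx
      obtain ⟨_, h2, _⟩ := h
      simp only [List.head?_cons, Option.some.injEq] at h2
      subst hx; subst h2; exact Or.inl rfl
  | a :: b :: t, u, v, x => by
      intro h hx
      obtain ⟨hc, hh, hl⟩ := h
      simp only [List.head?_cons, Option.some.injEq] at hh
      subst hh
      obtain ⟨hab, hc'⟩ := List.isChain_cons_cons.mp hc
      rw [List.getLast?_cons_cons] at hl
      rcases List.mem_cons.mp hx with hxa | hxt
      · exact Or.inl hxa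
      · rcases walk_mem_of_subset hE (b :: t) b v x ⟨hc', rfl, hl⟩ hxt with h' | h'
        · exact Or.inr (h' ▸ (hE hab).2)
        · exact Or.inr h'

lemma isWalk_inter_prod {s : Set V} :
    ∀ (l : List V) (u v : V), IsWalk E u v l → (∀ x ∈ l, x ∈ s) →
      IsWalk (E ∩ s ×ˢ s) u v l
  | [], u, v => by intro h _; obtain ⟨_, h2, _⟩ := h; simp at h2
  | [a], u, v => by
      intro h _
      exact ⟨List.isChain_singleton a, h.2.1, h.2.2⟩
  | a :: b :: t, u, v => by
      intro h hs
      obtain ⟨hc, hh, hl⟩ := h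
      obtain ⟨hab, hc'⟩ := List.isChain_cons_cons.mp hc
      rw [List.getLast?_cons_cons] at hl
      have IH := isWalk_inter_prod (b :: t) b v ⟨hc', rfl, hl⟩
        (fun x hx => hs x (List.mem_cons_of_mem _ hx))
      refine ⟨List.isChain_cons_cons.mpr ⟨⟨hab, ?_, ?_⟩, IH.1⟩, hh, by
        rw [List.getLast?_cons_cons]; exact IH.2.2⟩
      · exact hs a List.mem_cons_self
      · exact hs b (List.mem_cons_of_mem _ List.mem_cons_self)

lemma exists_two_walks {u v : V} {c : ℝ≥0∞}
    (h : gdist E W u v + gdist E W v u < c) :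
    ∃ l₁ l₂, IsWalk E u v l₁ ∧ IsWalk E v u l₂ ∧
      walkCost W l₁ + walkCost W l₂ < c := by
  set a := gdist E W u v
  set b := gdist E W v u
  have hab : a + b < c := h
  have ha : a ≠ ⊤ := ne_top_of_lt (lt_of_le_of_lt le_self_add hab)
  have hb : b ≠ ⊤ := ne_top_of_lt (lt_of_le_of_lt le_add_self hab)
  set ε : ℝ≥0∞ := (c - (a + b)) / 2 with hεdef
  have hε0 : ε ≠ 0 := by
    have : 0 < c - (a + b) := tsub_pos_iff_lt.mpr hab
    simpa [hεdef, ENNReal.div_eq_zero_iff] using this.ne'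
  obtain ⟨l₁, hw₁, hc₁⟩ := exists_walk_of_lt (W := W) (ENNReal.lt_add_right ha hε0)
  obtain ⟨l₂, hw₂, hc₂⟩ := exists_walk_of_lt (W := W) (ENNReal.lt_add_right hb hε0)
  refine ⟨l₁, l₂, hw₁, hw₂, ?_⟩
  calc walkCost W l₁ + walkCost W l₂ < (a + ε) + (b + ε) := ENNReal.add_lt_add hc₁ hc₂
    _ = (a + b) + (ε + ε) := by ring
    _ = (a + b) + (c - (a + b)) := by rw [hεdef, ENNReal.add_halves]
    _ = c := add_tsub_cancel_of_le hab.le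

lemma rt_vertex_bound {u y x : V} {l₁ l₂ : List V}
    (h₁ : IsWalk E u y l₁) (h₂ : IsWalk E y u l₂) (hx : x ∈ l₁ ∨ x ∈ l₂) :
    gdist E W u x + gdist E W x u ≤ walkCost W l₁ + walkCost W l₂ := by
  rcases hx with hx | hx
  · have hs := gdist_add_gdist_le (W := W) l₁ u y x h₁ hx
    have h3 : gdist E W x u ≤ gdist E W x y + gdist E W y u := gdist_triangle E W x y u
    have h4 : gdist E W y u ≤ walkCost W l₂ := gdist_le h₂
    calc gdist E W u x + gdist E W x u
        ≤ gdist E W u x + (gdist E W x y + gdist E W y u) := add_le_add_right h3 _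
      _ = (gdist E W u x + gdist E W x y) + gdist E W y u := (add_assoc _ _ _).symm
      _ ≤ walkCost W l₁ + walkCost W l₂ := add_le_add hs h4
  · have hs := gdist_add_gdist_le (W := W) l₂ y u x h₂ hx
    have h3 : gdist E W u x ≤ gdist E W u y + gdist E W y x := gdist_triangle E W u y x
    have h4 : gdist E W u y ≤ walkCost W l₁ := gdist_le h₁
    calc gdist E W u x + gdist E W x u
        ≤ (gdist E W u y + gdist E W y x) + gdist E W x u := add_le_add_left h3 _
      _ = gdist E W u y + (gdist E W y x + gdist E W x u) := add_assoc _ _ _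
      _ ≤ walkCost W l₁ + walkCost W l₂ := add_le_add h4 hs

lemma right_mem_of_gdist_lt_top {s : Set V} (hE : E ⊆ s ×ˢ s) {u v : V}
    (hu : u ∈ s) (h : gdist E W u v < ⊤) : v ∈ s := by
  obtain ⟨l, hw, _⟩ := exists_walk_of_lt h
  rcases walk_mem_of_subset hE l u v v hw (walk_snd_mem hw) with rfl | h'
  · exact hu
  · exact h'


variable {Vf : Type*} [DecidableEq Vf]

/-- round-trip distance in the subgraph induced by `H`. -/
def rtH (E : Finset (Vf × Vf)) (W : Vf × Vf → ℝ) (H : Finset Vf) (u v : Vf) : ℝ≥0∞ :=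
  gdist (↑E ∩ (↑H : Set Vf) ×ˢ (↑H : Set Vf)) W u v +
    gdist (↑E ∩ (↑H : Set Vf) ×ˢ (↑H : Set Vf)) W v u

lemma rtH_self (E : Finset (Vf × Vf)) (W : Vf × Vf → ℝ) (H : Finset Vf) (u : Vf) :
    rtH E W H u u = 0 := by simp [rtH, gdist_self]

lemma rtH_triangle (E : Finset (Vf × Vf)) (W : Vf × Vf → ℝ) (H : Finset Vf) (u v w : Vf) :
    rtH E W H u w ≤ rtH E W H u v + rtH E W H v w := by
  have h1 := gdist_triangle (↑E ∩ (↑H : Set Vf) ×ˢ (↑H : Set Vf)) W u v w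
  have h2 := gdist_triangle (↑E ∩ (↑H : Set Vf) ×ˢ (↑H : Set Vf)) W w v u
  calc rtH E W H u w ≤ (gdist _ W u v + gdist _ W v w) + (gdist _ W w v + gdist _ W v u) :=
        add_le_add h1 h2
    _ = rtH E W H u v + rtH E W H v w := by simp only [rtH]; ring

lemma FH_subset (E : Finset (Vf × Vf)) (H : Finset Vf) :
    (↑E ∩ (↑H : Set Vf) ×ˢ (↑H : Set Vf)) ⊆ (↑H : Set Vf) ×ˢ (↑H : Set Vf) :=
  Set.inter_subset_right

lemma mem_of_rtH_lt_top {E : Finset (Vf × Vf)} {W : Vf × Vf → ℝ} {H : Finset Vf} {u v : Vf}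
    (hu : u ∈ H) (h : rtH E W H u v < ⊤) : v ∈ H := by
  have h1 : gdist (↑E ∩ (↑H : Set Vf) ×ˢ (↑H : Set Vf)) W u v < ⊤ :=
    lt_of_le_of_lt le_self_add h
  have := right_mem_of_gdist_lt_top (FH_subset E H) (by exact hu : u ∈ (↑H : Set Vf)) h1
  exact this

lemma ball_radius (E : Finset (Vf × Vf)) (W : Vf × Vf → ℝ) (H : Finset Vf) (u : Vf)
    (c : ℝ≥0∞) (hu : u ∈ H) [DecidablePred (fun x => rtH E W H u x < c)] :
    ∀ y ∈ H.filter (fun x => rtH E W H u x < c),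
      inducedRtdist (↑E) W (↑(H.filter (fun x => rtH E W H u x < c))) u y ≤ c := by
  intro y hy
  set A := H.filter (fun x => rtH E W H u x < c) with hAdef
  have hy' : rtH E W H u y < c := (Finset.mem_filter.mp hy).2
  obtain ⟨l₁, l₂, hw₁, hw₂, hsum⟩ := exists_two_walks (W := W) hy'
  have hmem : ∀ x, x ∈ l₁ ∨ x ∈ l₂ → x ∈ A := by
    intro x hx
    have h1 : rtH E W H u x ≤ walkCost W l₁ + walkCost W l₂ :=
      rt_vertex_bound hw₁ hw₂ hx
    have h2 : x ∈ H := by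
      rcases hx with hx | hx
      · rcases walk_mem_of_subset (FH_subset E H) l₁ u y x hw₁ hx with rfl | h' <;>
          [exact hu; exact h']
      · rcases walk_mem_of_subset (FH_subset E H) l₂ y u x hw₂ hx with rfl | h'
        · exact (Finset.mem_filter.mp hy).1
        · exact h'
    exact Finset.mem_filter.mpr ⟨h2, lt_of_le_of_lt h1 hsum⟩
  have hsub : (↑E ∩ (↑H : Set Vf) ×ˢ (↑H : Set Vf)) ∩ (↑A : Set Vf) ×ˢ (↑A : Set Vf) ⊆
      ↑E ∩ (↑A : Set Vf) ×ˢ (↑A : Set Vf) := fun p hp => ⟨hp.1.1, hp.2⟩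
  have hw₁' : IsWalk (↑E ∩ (↑A : Set Vf) ×ˢ (↑A : Set Vf)) u y l₁ :=
    IsWalk.mono hsub (isWalk_inter_prod l₁ u y hw₁ (fun x hx => hmem x (Or.inl hx)))
  have hw₂' : IsWalk (↑E ∩ (↑A : Set Vf) ×ˢ (↑A : Set Vf)) y u l₂ :=
    IsWalk.mono hsub (isWalk_inter_prod l₂ y u hw₂ (fun x hx => hmem x (Or.inr hx)))
  calc inducedRtdist (↑E) W (↑A) u y ≤ walkCost W l₁ + walkCost W l₂ :=
        add_le_add (gdist_le hw₁') (gdist_le hw₂')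
    _ ≤ c := hsum.le

variable [DecidableEq V]

lemma rtH_comm {E : Finset (V × V)} {W : V × V → ℝ} {H : Finset V} (u v : V) :
    rtH E W H u v = rtH E W H v u := add_comm _ _

set_option maxHeartbeats 1000000 in
lemma round (E : Finset (V × V)) (W : V × V → ℝ) (S : Finset V) (R σ : ℝ) (k : ℕ)
    (hR : 0 < R) (hk : 0 < k) (hσ : 1 < σ) (hσk : (S.card : ℝ) ≤ σ ^ k) :
    ∀ (N : ℕ) (H T : Finset V), T.card ≤ N → T ⊆ H → T ⊆ S →
      (∀ w ∈ T, ∀ v, rtdist (↑E) W w v ≤ ENNReal.ofReal R →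
        rtH E W H w v ≤ ENNReal.ofReal R) →
      ∃ (𝒞 : Finset (Finset V)) (Def : Finset V),
        Def ⊆ T ∧
        σ * (Def.card : ℝ) ≤ (σ - 1) * (T.card : ℝ) ∧
        (∀ B ∈ 𝒞, B ⊆ H) ∧
        (∀ B ∈ 𝒞, ∃ x ∈ B, ∀ y ∈ B,
          inducedRtdist (↑E) W (↑B) x y ≤ ENNReal.ofReal ((5 * k + 1) * R)) ∧
        (∀ w ∈ T, w ∉ Def → ∀ v, rtdist (↑E) W w v ≤ ENNReal.ofReal R →
          ∃ B ∈ 𝒞, w ∈ B ∧ v ∈ B) ∧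
        (∀ v : V, (𝒞.filter (fun B => v ∈ B)).card ≤ 1) := by
  have hσ0 : (0:ℝ) < σ := lt_trans one_pos hσ
  intro N
  induction N with
  | zero =>
      intro H T hN _ _ _
      have : T = ∅ := Finset.card_eq_zero.mp (Nat.le_zero.mp hN)
      subst this
      refine ⟨∅, ∅, Finset.Subset.refl _, by simp, by simp, by simp, by simp, by simp⟩
  | succ N ih =>
      intro H T hN hTH hTS hINV
      rcases T.eq_empty_or_nonempty with rfl | ⟨u, hu⟩
      · refine ⟨∅, ∅, Finset.Subset.refl _, by simp, by simp, by simp, by simp, by simp⟩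
      classical
      have huH : u ∈ H := hTH hu
      -- membership of u in any positive-radius filter
      have hu_mem : ∀ c : ℝ, 0 < c →
          u ∈ T.filter (fun w => rtH E W H u w < ENNReal.ofReal (c * R)) := by
        intro c hc
        refine Finset.mem_filter.mpr ⟨hu, ?_⟩
        rw [rtH_self]
        exact ENNReal.ofReal_pos.mpr (by positivity)
      -- monotonicity of the filters
      have hmono : ∀ (c d : ℝ), c ≤ d →
          (T.filter (fun w => rtH E W H u w < ENNReal.ofReal (c * R))) ⊆
          (T.filter (fun w => rtH E W H u w < ENNReal.ofReal (d * R))) := by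
        intro c d hcd w hw
        obtain ⟨hw1, hw2⟩ := Finset.mem_filter.mp hw
        refine Finset.mem_filter.mpr ⟨hw1, lt_of_lt_of_le hw2 ?_⟩
        exact ENNReal.ofReal_le_ofReal (mul_le_mul_of_nonneg_right hcd hR.le)
      -- choice of the level m
      have hmin : ∃ m : ℕ, m < k ∧
          (((T.filter (fun w => rtH E W H u w <
              ENNReal.ofReal ((5 * ((m : ℝ) + 1) + 5) * R))).card : ℝ) ≤
            σ * ((T.filter (fun w => rtH E W H u w <
              ENNReal.ofReal ((5 * (m : ℝ) + 5) * R))).card : ℝ)) := by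
        by_contra hcon
        push_neg at hcon
        have grow : ∀ m : ℕ, m ≤ k →
            σ ^ m ≤ ((T.filter (fun w => rtH E W H u w <
              ENNReal.ofReal ((5 * (m : ℝ) + 5) * R))).card : ℝ) := by
          intro m
          induction m with
          | zero =>
              intro _
              simp only [pow_zero]
              have h1 : u ∈ T.filter (fun w => rtH E W H u w <
                  ENNReal.ofReal ((5 * ((0:ℕ) : ℝ) + 5) * R)) :=
                hu_mem _ (by norm_num)
              exact_mod_cast Finset.card_pos.mpr ⟨u, h1⟩
          | succ m ihm =>
              intro hm
              have h1 := ihm (Nat.le_of_succ_le hm)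
              have h2 := hcon m (by omega)
              simp only [Nat.cast_add, Nat.cast_one]
              calc σ ^ (m + 1) = σ * σ ^ m := by ring
                _ ≤ σ * _ := mul_le_mul_of_nonneg_left h1 hσ0.le
                _ ≤ _ := h2.le
        have h1 := grow (k - 1) (by omega)
        have h2 := hcon (k - 1) (by omega)
        have h4 : ∀ c : ℝ, ((T.filter (fun w => rtH E W H u w <
            ENNReal.ofReal (c * R))).card : ℝ) ≤ σ ^ k := by
          intro c
          refine le_trans ?_ hσk
          exact_mod_cast Finset.card_le_card ((Finset.filter_subset _ _).trans hTS)
        have h5 : σ ^ (k - 1) * σ = σ ^ k := by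
          rw [← pow_succ, Nat.sub_add_cancel hk]
        have h6 := h4 (5 * ((((k-1) : ℕ) : ℝ) + 1) + 5)
        nlinarith [mul_le_mul_of_nonneg_right h1 hσ0.le]
      obtain ⟨m, hmk, hmle⟩ := hmin
      -- the main sets
      set A : Finset V :=
        H.filter (fun x => rtH E W H u x < ENNReal.ofReal ((5 * (m:ℝ) + 6) * R)) with hAdef
      set Tin : Finset V :=
        T.filter (fun w => rtH E W H u w < ENNReal.ofReal ((5 * (m:ℝ) + 5) * R)) with hTindef
      set TD : Finset V :=
        T.filter (fun w => rtH E W H u w < ENNReal.ofReal ((5 * (m:ℝ) + 8) * R)) with hTDdef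
      set T' : Finset V := T \ TD with hT'def
      set D : Finset V := TD \ Tin with hDdef
      have hTinTD : Tin ⊆ TD := hmono (5 * (m:ℝ) + 5) (5 * (m:ℝ) + 8) (by linarith)
      have hTDT : TD ⊆ T := Finset.filter_subset _ _
      have huTD : u ∈ TD := by
        have := hu_mem (5 * (m:ℝ) + 8) (by positivity)
        simpa [hTDdef, mul_comm] using this
      have huTin : u ∈ Tin := by
        have := hu_mem (5 * (m:ℝ) + 5) (by positivity)
        simpa [hTindef, mul_comm] using this
      have huA : u ∈ A := by
        refine Finset.mem_filter.mpr ⟨huH, ?_⟩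
        rw [rtH_self]
        exact ENNReal.ofReal_pos.mpr (by positivity)
      -- cardinality facts
      have hcard1 : (D.card : ℝ) ≤ (σ - 1) * (Tin.card : ℝ) := by
        have e1 : D.card + Tin.card = TD.card :=
          Finset.card_sdiff_add_card_eq_card hTinTD
        have e2 : TD.card ≤ (T.filter (fun w => rtH E W H u w <
            ENNReal.ofReal ((5 * ((m : ℝ) + 1) + 5) * R))).card :=
          Finset.card_le_card (hmono (5 * (m:ℝ) + 8) (5 * ((m:ℝ) + 1) + 5) (by linarith))
        have e3 : (TD.card : ℝ) ≤ σ * (Tin.card : ℝ) := le_trans (by exact_mod_cast e2) hmle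
        have e4 : (D.card : ℝ) + Tin.card = TD.card := by exact_mod_cast e1
        nlinarith
      have hT'T : T' ⊆ T := Finset.sdiff_subset
      have hcard2 : T'.card ≤ N := by
        have e1 : T'.card + TD.card = T.card :=
          Finset.card_sdiff_add_card_eq_card hTDT
        have e2 : 1 ≤ TD.card := Finset.card_pos.mpr ⟨u, huTD⟩
        omega
      -- T' avoids A
      have hT'HA : T' ⊆ H \ A := by
        intro w hw
        obtain ⟨hwT, hwTD⟩ := Finset.mem_sdiff.mp hw
        refine Finset.mem_sdiff.mpr ⟨hTH hwT, fun hwA => hwTD ?_⟩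
        have h1 := (Finset.mem_filter.mp hwA).2
        refine Finset.mem_filter.mpr ⟨hwT, lt_of_lt_of_le h1 ?_⟩
        exact ENNReal.ofReal_le_ofReal (by nlinarith)
      -- the invariant is maintained
      have hINV' : ∀ w ∈ T', ∀ v, rtdist (↑E) W w v ≤ ENNReal.ofReal R →
          rtH E W (H \ A) w v ≤ ENNReal.ofReal R := by
        intro w hw v hv
        obtain ⟨hwT, hwTD⟩ := Finset.mem_sdiff.mp hw
        have hwH : w ∈ H := hTH hwT
        have hfar : ENNReal.ofReal ((5 * (m:ℝ) + 8) * R) ≤ rtH E W H u w := by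
          by_contra hlt
          exact hwTD (Finset.mem_filter.mpr ⟨hwT, not_le.mp hlt⟩)
        have h1 : rtH E W H w v ≤ ENNReal.ofReal R := hINV w hwT v hv
        refine ENNReal.le_of_forall_pos_le_add (fun ε hε _ => ?_)
        set δ : ℝ := min (ε : ℝ) R with hδdef
        have hδ0 : 0 < δ := lt_min (by exact_mod_cast hε) hR
        have hδR : δ ≤ R := min_le_right _ _
        have h2 : rtH E W H w v < ENNReal.ofReal R + ENNReal.ofReal δ :=
          lt_of_le_of_lt h1 (ENNReal.lt_add_right ENNReal.ofReal_ne_top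
            (by simpa using (ENNReal.ofReal_pos.mpr hδ0).ne'))
        obtain ⟨l₁, l₂, hw₁, hw₂, hsum⟩ := exists_two_walks (W := W) h2
        have hvert : ∀ x, x ∈ l₁ ∨ x ∈ l₂ → x ∈ H \ A := by
          intro x hx
          have hxH : x ∈ H := by
            rcases hx with hx | hx
            · rcases walk_mem_of_subset (FH_subset E H) l₁ w v x hw₁ hx with rfl | h'
              · exact hwH
              · exact h'
            · rcases walk_mem_of_subset (FH_subset E H) l₂ v w x hw₂ hx with rfl | h'
              · exact mem_of_rtH_lt_top hwH (lt_of_le_of_lt h1 ENNReal.ofReal_lt_top)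
              · exact h'
          have hrtwx : rtH E W H w x ≤ walkCost W l₁ + walkCost W l₂ :=
            rt_vertex_bound hw₁ hw₂ hx
          refine Finset.mem_sdiff.mpr ⟨hxH, fun hxA => ?_⟩
          have hxlt : rtH E W H u x < ENNReal.ofReal ((5 * (m:ℝ) + 6) * R) :=
            (Finset.mem_filter.mp hxA).2
          have hbig : rtH E W H u w < ENNReal.ofReal ((5 * (m:ℝ) + 8) * R) := by
            calc rtH E W H u w ≤ rtH E W H u x + rtH E W H x w := rtH_triangle E W H u x w
              _ = rtH E W H u x + rtH E W H w x := by rw [rtH_comm x w]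
              _ ≤ rtH E W H u x + (walkCost W l₁ + walkCost W l₂) :=
                  add_le_add_right hrtwx _
              _ < ENNReal.ofReal ((5 * (m:ℝ) + 6) * R) +
                  (ENNReal.ofReal R + ENNReal.ofReal δ) :=
                  ENNReal.add_lt_add hxlt hsum
              _ ≤ ENNReal.ofReal ((5 * (m:ℝ) + 8) * R) := by
                  rw [← ENNReal.ofReal_add (by positivity) hδ0.le,
                    ← ENNReal.ofReal_add (by positivity) (by positivity)]
                  exact ENNReal.ofReal_le_ofReal (by nlinarith)
          exact absurd hbig (not_lt.mpr hfar)
        -- restrict the walks to H \ A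
        have hsub : (↑E ∩ (↑H : Set V) ×ˢ (↑H : Set V)) ∩
            (↑(H \ A) : Set V) ×ˢ (↑(H \ A) : Set V) ⊆
            ↑E ∩ (↑(H \ A) : Set V) ×ˢ (↑(H \ A) : Set V) := fun p hp => ⟨hp.1.1, hp.2⟩
        have hw₁' : IsWalk (↑E ∩ (↑(H \ A) : Set V) ×ˢ (↑(H \ A) : Set V)) w v l₁ :=
          IsWalk.mono hsub (isWalk_inter_prod l₁ w v hw₁
            (fun x hx => hvert x (Or.inl hx)))
        have hw₂' : IsWalk (↑E ∩ (↑(H \ A) : Set V) ×ˢ (↑(H \ A) : Set V)) v w l₂ :=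
          IsWalk.mono hsub (isWalk_inter_prod l₂ v w hw₂
            (fun x hx => hvert x (Or.inr hx)))
        calc rtH E W (H \ A) w v ≤ walkCost W l₁ + walkCost W l₂ :=
              add_le_add (gdist_le hw₁') (gdist_le hw₂')
          _ ≤ ENNReal.ofReal R + ENNReal.ofReal δ := hsum.le
          _ ≤ ENNReal.ofReal R + ε := by
              refine add_le_add_right ?_ _
              rw [show ((ε : ℝ≥0∞)) = ENNReal.ofReal (ε : ℝ) by
                simp [ENNReal.ofReal_coe_nnreal]]
              exact ENNReal.ofReal_le_ofReal (min_le_left _ _)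
      -- recursive call
      obtain ⟨𝒞', Def', hD'T, hD'card, hD'H, hD'rad, hD'cov, hD'mult⟩ :=
        ih (H \ A) T' hcard2 hT'HA (hT'T.trans hTS) hINV'
      refine ⟨insert A 𝒞', D ∪ Def', ?_, ?_, ?_, ?_, ?_, ?_⟩
      · exact Finset.union_subset (Finset.sdiff_subset.trans hTDT) (hD'T.trans hT'T)
      · -- cardinality bound
        have e1 : ((D ∪ Def').card : ℝ) ≤ (D.card : ℝ) + Def'.card := by
          exact_mod_cast Finset.card_union_le _ _
        have e2 : (T'.card : ℝ) + TD.card = T.card := by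
          exact_mod_cast Finset.card_sdiff_add_card_eq_card hTDT
        have e3 : (D.card : ℝ) + Tin.card = TD.card := by
          exact_mod_cast Finset.card_sdiff_add_card_eq_card hTinTD
        nlinarith
      · intro B hB
        rcases Finset.mem_insert.mp hB with rfl | hB
        · exact Finset.filter_subset _ _
        · exact (hD'H B hB).trans (Finset.sdiff_subset)
      · intro B hB
        rcases Finset.mem_insert.mp hB with rfl | hB
        · refine ⟨u, huA, fun y hy => ?_⟩
          have := ball_radius E W H u (ENNReal.ofReal ((5 * (m:ℝ) + 6) * R)) huH y hy
          refine le_trans this (ENNReal.ofReal_le_ofReal ?_)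
          have hm1 : (m : ℝ) ≤ (k : ℝ) - 1 := by
            have : (m : ℝ) + 1 ≤ (k : ℝ) := by exact_mod_cast hmk
            linarith
          nlinarith
        · exact hD'rad B hB
      · -- coverage
        intro w hwT hwDef v hv
        by_cases hwTD : w ∈ TD
        · by_cases hwTin : w ∈ Tin
          · refine ⟨A, Finset.mem_insert_self _ _, ?_, ?_⟩
            · refine Finset.mem_filter.mpr ⟨hTH hwT, ?_⟩
              exact lt_of_lt_of_le (Finset.mem_filter.mp hwTin).2
                (ENNReal.ofReal_le_ofReal (by nlinarith))
            · have h1 : rtH E W H w v ≤ ENNReal.ofReal R := hINV w hwT v hv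
              have hvH : v ∈ H :=
                mem_of_rtH_lt_top (hTH hwT) (lt_of_le_of_lt h1 ENNReal.ofReal_lt_top)
              refine Finset.mem_filter.mpr ⟨hvH, ?_⟩
              calc rtH E W H u v ≤ rtH E W H u w + rtH E W H w v := rtH_triangle E W H u w v
                _ ≤ rtH E W H u w + ENNReal.ofReal R := add_le_add_right h1 _
                _ < ENNReal.ofReal ((5 * (m:ℝ) + 5) * R) + ENNReal.ofReal R :=
                    ENNReal.add_lt_add_right ENNReal.ofReal_ne_top
                      (Finset.mem_filter.mp hwTin).2
                _ ≤ ENNReal.ofReal ((5 * (m:ℝ) + 6) * R) := by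
                    rw [← ENNReal.ofReal_add (by positivity) hR.le]
                    exact ENNReal.ofReal_le_ofReal (by nlinarith)
          · exact absurd (Finset.mem_union_left _
              (Finset.mem_sdiff.mpr ⟨hwTD, hwTin⟩)) hwDef
        · have hwT' : w ∈ T' := Finset.mem_sdiff.mpr ⟨hwT, hwTD⟩
          have hwDef' : w ∉ Def' := fun h => hwDef (Finset.mem_union_right _ h)
          obtain ⟨B, hB, hwB, hvB⟩ := hD'cov w hwT' hwDef' v hv
          exact ⟨B, Finset.mem_insert_of_mem hB, hwB, hvB⟩
      · -- multiplicity
        intro v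
        by_cases hvA : v ∈ A
        · have : (insert A 𝒞').filter (fun B => v ∈ B) ⊆ {A} := by
            intro B hB
            obtain ⟨hB1, hB2⟩ := Finset.mem_filter.mp hB
            rcases Finset.mem_insert.mp hB1 with rfl | hB1
            · exact Finset.mem_singleton_self _
            · exact absurd hvA (Finset.mem_sdiff.mp ((hD'H B hB1) hB2)).2
          simpa using Finset.card_le_card this
        · have : (insert A 𝒞').filter (fun B => v ∈ B) ⊆ 𝒞'.filter (fun B => v ∈ B) := by
            intro B hB
            obtain ⟨hB1, hB2⟩ := Finset.mem_filter.mp hB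
            rcases Finset.mem_insert.mp hB1 with rfl | hB1
            · exact absurd hB2 hvA
            · exact Finset.mem_filter.mpr ⟨hB1, hB2⟩
          exact le_trans (Finset.card_le_card this) (hD'mult v)

lemma outer [Fintype V] (E : Finset (V × V)) (W : V × V → ℝ) (S : Finset V)
    (R σ : ℝ) (k : ℕ)
    (hR : 0 < R) (hk : 0 < k) (hσ : 1 < σ) (hσk : (S.card : ℝ) ≤ σ ^ k) :
    ∀ (N : ℕ) (T : Finset V), T.card ≤ N → T ⊆ S →
      ∃ 𝒞 : Finset (Finset V),
        (∀ B ∈ 𝒞, ∃ x ∈ B, ∀ y ∈ B,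
          inducedRtdist (↑E) W (↑B) x y ≤ ENNReal.ofReal ((5 * k + 1) * R)) ∧
        (∀ w ∈ T, ∀ v, rtdist (↑E) W w v ≤ ENNReal.ofReal R → ∃ B ∈ 𝒞, w ∈ B ∧ v ∈ B) ∧
        (T = ∅ → 𝒞 = ∅) ∧
        (∀ v : V, ((𝒞.filter (fun B => v ∈ B)).card : ℝ) ≤
          σ * (Real.log (T.card : ℝ) + 1)) := by
  have hσ0 : (0:ℝ) < σ := lt_trans one_pos hσ
  intro N
  induction N with
  | zero =>
      intro T hN _
      have : T = ∅ := Finset.card_eq_zero.mp (Nat.le_zero.mp hN)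
      subst this
      refine ⟨∅, by simp, by simp, fun _ => rfl, fun v => ?_⟩
      have h0 : (((∅ : Finset (Finset V))).filter (fun B => v ∈ B)).card = 0 := by simp
      rw [h0]
      have h1 : Real.log (((∅ : Finset V).card : ℕ) : ℝ) = 0 := by simp
      rw [h1]
      push_cast
      nlinarith
  | succ N ih =>
      intro T hN hTS
      rcases T.eq_empty_or_nonempty with rfl | hne
      · refine ⟨∅, by simp, by simp, fun _ => rfl, fun v => ?_⟩
        have h0 : (((∅ : Finset (Finset V))).filter (fun B => v ∈ B)).card = 0 := by simp
        rw [h0]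
        have h1 : Real.log (((∅ : Finset V).card : ℕ) : ℝ) = 0 := by simp
        rw [h1]
        push_cast
        nlinarith
      classical
      have huniv : ((↑E : Set (V × V)) ∩
          (↑(Finset.univ : Finset V) : Set V) ×ˢ (↑(Finset.univ : Finset V) : Set V)) =
          (↑E : Set (V × V)) := by
        simp
      have hINV : ∀ w ∈ T, ∀ v, rtdist (↑E) W w v ≤ ENNReal.ofReal R →
          rtH E W Finset.univ w v ≤ ENNReal.ofReal R := by
        intro w _ v hv
        unfold rtH
        rw [huniv]
        exact hv
      obtain ⟨𝒞₁, Def, hDefT, hDefcard, _, h1rad, h1cov, h1mult⟩ :=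
        round E W S R σ k hR hk hσ hσk T.card Finset.univ T (le_refl _)
          (Finset.subset_univ _) hTS hINV
      have ht0 : (0:ℝ) < T.card := by
        exact_mod_cast Finset.card_pos.mpr hne
      have hDlt : (Def.card : ℝ) < T.card := by nlinarith
      have hDN : Def.card ≤ N := by
        have : Def.card < T.card := by exact_mod_cast hDlt
        omega
      obtain ⟨𝒞₂, h2rad, h2cov, h2emp, h2mult⟩ := ih Def hDN (hDefT.trans hTS)
      refine ⟨𝒞₁ ∪ 𝒞₂, ?_, ?_, ?_, ?_⟩
      · intro B hB
        rcases Finset.mem_union.mp hB with hB | hB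
        · exact h1rad B hB
        · exact h2rad B hB
      · intro w hw v hv
        by_cases hwD : w ∈ Def
        · obtain ⟨B, hB, h⟩ := h2cov w hwD v hv
          exact ⟨B, Finset.mem_union_right _ hB, h⟩
        · obtain ⟨B, hB, h⟩ := h1cov w hw hwD v hv
          exact ⟨B, Finset.mem_union_left _ hB, h⟩
      · intro h
        exact absurd h hne.ne_empty
      · intro v
        have hcount : ((𝒞₁ ∪ 𝒞₂).filter (fun B => v ∈ B)).card ≤
            (𝒞₁.filter (fun B => v ∈ B)).card + (𝒞₂.filter (fun B => v ∈ B)).card := by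
          rw [Finset.filter_union]
          exact Finset.card_union_le _ _
        have hc1 := h1mult v
        have hc2 := h2mult v
        have hlogT : (0:ℝ) ≤ Real.log (T.card : ℝ) := by
          apply Real.log_nonneg
          exact_mod_cast Finset.card_pos.mpr hne
        rcases Finset.eq_empty_or_nonempty Def with hD | hD
        · have h𝒞₂ : 𝒞₂ = ∅ := h2emp hD
          subst h𝒞₂
          have h1 : (((𝒞₁ ∪ (∅ : Finset (Finset V))).filter (fun B => v ∈ B)).card : ℝ) ≤ 1 := by
            rw [Finset.union_empty]
            exact_mod_cast hc1
          nlinarith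
        · have hd0 : (0:ℝ) < Def.card := by
            exact_mod_cast Finset.card_pos.mpr hD
          have hd1 : (1:ℝ) ≤ Def.card := by
            exact_mod_cast Finset.card_pos.mpr hD
          -- log inequality
          have hfrac0 : (0:ℝ) < 1 - 1/σ := by
            have : 1/σ < 1 := by
              rw [div_lt_one hσ0]; exact hσ
            linarith
          have hcalc : σ * ((1 - 1/σ) * (T.card : ℝ)) = (σ - 1) * T.card := by
            field_simp
          have hd_le : (Def.card : ℝ) ≤ (1 - 1/σ) * T.card := by nlinarith
          have hlog1 : Real.log (Def.card : ℝ) ≤ Real.log ((1 - 1/σ) * T.card) := by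
            rw [Real.log_le_log_iff hd0 (by positivity)]
            exact hd_le
          have hlog2 : Real.log ((1 - 1/σ) * T.card) =
              Real.log (1 - 1/σ) + Real.log (T.card : ℝ) :=
            Real.log_mul (ne_of_gt hfrac0) (ne_of_gt ht0)
          have hlog3 : Real.log (1 - 1/σ) ≤ -(1/σ) := by
            rw [Real.log_le_iff_le_exp hfrac0]
            have := Real.add_one_le_exp (-(1/σ))
            linarith
          have hσinv : σ * (1/σ) = 1 := by field_simp
          have hkey : 1 + σ * Real.log (Def.card : ℝ) ≤ σ * Real.log (T.card : ℝ) := by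
            have : Real.log (Def.card : ℝ) ≤ Real.log (T.card : ℝ) - 1/σ := by
              rw [hlog2] at hlog1
              linarith
            nlinarith
          have hcR : (((𝒞₁ ∪ 𝒞₂).filter (fun B => v ∈ B)).card : ℝ) ≤
              1 + σ * (Real.log (Def.card : ℝ) + 1) := by
            have e1 : (((𝒞₁ ∪ 𝒞₂).filter (fun B => v ∈ B)).card : ℝ) ≤
                ((𝒞₁.filter (fun B => v ∈ B)).card : ℝ) +
                ((𝒞₂.filter (fun B => v ∈ B)).card : ℝ) := by exact_mod_cast hcount
            have e2 : ((𝒞₁.filter (fun B => v ∈ B)).card : ℝ) ≤ 1 := by exact_mod_cast hc1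
            linarith
          nlinarith

end RTCover

/-- **Improved source-wise round-trip covers.**
There is an absolute constant `C > 0` such that for every weighted directed
graph `G = (V, E, W)` with `n ≥ 2` vertices and positive edge weights, every
source set `S ⊆ V` of size `s ≥ 2`, every integer `k > 1` and every real
`R > 0`, there is an `S`-sourcewise `(C * k * log n, R)`-cover of `G` in
which every vertex is contained in at most `C * s^(1/k) * log n` balls. -/
theorem sourcewise_roundtrip_cover :
    ∃ C : ℝ, 0 < C ∧
      ∀ (V : Type) [Fintype V] [DecidableEq V] (E : Finset (V × V)) (W : V × V → ℝ),
        (∀ e ∈ E, 0 < W e) →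
        2 ≤ Fintype.card V →
        ∀ S : Finset V, 2 ≤ S.card →
        ∀ k : ℕ, 1 < k →
        ∀ R : ℝ, 0 < R →
        ∃ 𝒞 : Finset (Finset V),
          -- every ball has round-trip radius at most (C * k * log n) * R
          (∀ B ∈ 𝒞, ∃ x ∈ B, ∀ y ∈ B,
            inducedRtdist (↑E) W (↑B) x y ≤
              ENNReal.ofReal (C * (k : ℝ) * Real.log (Fintype.card V) * R)) ∧
          -- every pair in S × V at round-trip distance ≤ R lies in a common ball
          (∀ u ∈ S, ∀ v : V,
            rtdist (↑E) W u v ≤ ENNReal.ofReal R →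
              ∃ B ∈ 𝒞, u ∈ B ∧ v ∈ B) ∧
          -- every vertex is contained in at most C * s^(1/k) * log n balls
          (∀ v : V,
            ((𝒞.filter (fun B => v ∈ B)).card : ℝ) ≤
              C * (S.card : ℝ) ^ ((1 : ℝ) / (k : ℝ)) * Real.log (Fintype.card V)) := by
  refine ⟨9, by norm_num, ?_⟩
  intro V _ _ E W hW hn S hS k hk R hR
  classical
  have hn2 : (2:ℝ) ≤ (Fintype.card V : ℝ) := by exact_mod_cast hn
  have hs2 : (2:ℝ) ≤ (S.card : ℝ) := by exact_mod_cast hS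
  have hk0 : 0 < k := by omega
  have hkR : (0:ℝ) < (k:ℝ) := by exact_mod_cast hk0
  have hk2R : (2:ℝ) ≤ (k:ℝ) := by exact_mod_cast hk
  set σ : ℝ := (S.card : ℝ) ^ ((1:ℝ)/(k:ℝ)) with hσdef
  have hσ : 1 < σ := by
    rw [hσdef, Real.one_lt_rpow_iff_of_pos (by linarith : (0:ℝ) < (S.card:ℝ))]
    exact Or.inl ⟨by linarith, by positivity⟩
  have hσk : (S.card : ℝ) ≤ σ ^ k := by
    have heq : σ ^ k = (S.card : ℝ) := by
      rw [hσdef, ← Real.rpow_natCast ((S.card:ℝ) ^ ((1:ℝ)/(k:ℝ))) k,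
        ← Real.rpow_mul (by linarith : (0:ℝ) ≤ (S.card:ℝ)),
        one_div, inv_mul_cancel₀ (ne_of_gt hkR), Real.rpow_one]
    linarith [heq.ge]
  obtain ⟨𝒞, hrad, hcov, _, hmult⟩ :=
    RTCover.outer E W S R σ k hR hk0 hσ hσk S.card S (le_refl _) (Finset.Subset.refl _)
  have hlog2 : (0.6931471803:ℝ) < Real.log 2 := Real.log_two_gt_d9
  have hlogn : Real.log 2 ≤ Real.log (Fintype.card V : ℝ) := by
    rw [Real.log_le_log_iff (by norm_num) (by linarith)]
    exact hn2
  have hln : (0.6931471803:ℝ) ≤ Real.log (Fintype.card V : ℝ) := by linarith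
  have hsn : (S.card : ℝ) ≤ (Fintype.card V : ℝ) := by
    exact_mod_cast Finset.card_le_univ S
  have hlogs : Real.log (S.card : ℝ) ≤ Real.log (Fintype.card V : ℝ) :=
    (Real.log_le_log_iff (by linarith) (by linarith)).mpr hsn
  refine ⟨𝒞, ?_, ?_, ?_⟩
  · intro B hB
    obtain ⟨x, hx, hxall⟩ := hrad B hB
    refine ⟨x, hx, fun y hy => le_trans (hxall y hy) (ENNReal.ofReal_le_ofReal ?_)⟩
    have h1 : (5*(k:ℝ)+1) ≤ 9*(k:ℝ)*Real.log (Fintype.card V : ℝ) := by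
      nlinarith [mul_le_mul_of_nonneg_left hln (show (0:ℝ) ≤ 9*(k:ℝ) by linarith)]
    nlinarith [mul_le_mul_of_nonneg_right h1 hR.le]
  · exact hcov
  · intro v
    refine le_trans (hmult v) ?_
    have hσ0 : (0:ℝ) < σ := by linarith
    have h1 : Real.log (S.card:ℝ) + 1 ≤ 9 * Real.log (Fintype.card V : ℝ) := by linarith
    calc σ * (Real.log (S.card:ℝ) + 1) ≤ σ * (9 * Real.log (Fintype.card V : ℝ)) := by
          nlinarith
      _ = 9 * σ * Real.log (Fintype.card V : ℝ) := by ring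
end
end

section
/- Let V be a finite set, let U ⊆ V be nonempty, and let d : V×V → [0,∞] satisfy the triangle inequality d(x,z) ≤ d(x,y) + d(y,z) for all x,y,z ∈ V. Fix reals r > 0, R > 0, s ≥ 2, set β = (log s)/r, and let (r_x)_{x∈U} be independent random variables each distributed as Exp(β). Assign each vertex w ∈ V to a center x ∈ U maximizing r_x − d(x,w) whenever max_{x∈U}(r_x − d(x,w)) > 0, and leave w unassigned otherwise (almost surely the maximizer is unique). Then for any two vertices u, v ∈ V with d(u,v) + d(v,u) ≤ R, the probability that u and v are either assigned to the same center or both unassigned is at least e^{−βR} = s^{−R/r}. -/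
open MeasureTheory ProbabilityTheory
open scoped ENNReal

noncomputable section

/-- The score `r_x - d(x,w)` (as an extended real) of a center `x` for a vertex
`w`, where the radius `r_x = T x ω` is random. -/
def score {V Ω : Type*} (d : V → V → ℝ≥0∞) (T : V → Ω → ℝ) (x w : V) (ω : Ω) :
    EReal :=
  (T x ω : EReal) - ((d x w : ℝ≥0∞) : EReal)

/-- Vertex `w` is assigned to center `x ∈ U`: the score of `x` for `w` is
positive and maximal among all centers in `U`. -/
def AssignedTo {V Ω : Type*} (U : Finset V) (d : V → V → ℝ≥0∞)
    (T : V → Ω → ℝ) (x w : V) (ω : Ω) : Prop :=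
  x ∈ U ∧ 0 < score d T x w ω ∧ ∀ y ∈ U, score d T y w ω ≤ score d T x w ω

/-- Vertex `w` is unassigned: no center in `U` has positive score for `w`. -/
def Unassigned {V Ω : Type*} (U : Finset V) (d : V → V → ℝ≥0∞)
    (T : V → Ω → ℝ) (w : V) (ω : Ω) : Prop :=
  ∀ x ∈ U, score d T x w ω ≤ 0

section Aux

open Real Set

lemma expMeasure_apply' {β : ℝ} {A : Set ℝ} (hA : MeasurableSet A) :
    expMeasure β A = ∫⁻ x in A, exponentialPDF β x := by
  rw [expMeasure, gammaMeasure, withDensity_apply _ hA]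
  rfl

lemma measurable_exponentialPDF (β : ℝ) : Measurable (exponentialPDF β) :=
  ENNReal.measurable_ofReal.comp (measurable_exponentialPDFReal β)

/-- Memorylessness of the exponential distribution. -/
lemma expMeasure_shift {β R : ℝ} (hβ : 0 < β) (hR : 0 ≤ R) {A : Set ℝ}
    (hA : MeasurableSet A) :
    expMeasure β ((fun t => t - R) ⁻¹' A ∩ Ici R)
      = ENNReal.ofReal (Real.exp (-(β * R))) * expMeasure β A := by
  have hpdf := measurable_exponentialPDF β
  have hB : MeasurableSet ((fun t => t - R) ⁻¹' A ∩ Ici R) :=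
    ((measurable_id.sub_const R) hA).inter measurableSet_Ici
  have hpre : (fun x : ℝ => x + R) ⁻¹' ((fun t => t - R) ⁻¹' A ∩ Ici R) = A ∩ Ici 0 := by
    ext x
    simp only [Set.mem_preimage, Set.mem_inter_iff, Set.mem_Ici, add_sub_cancel_right,
      le_add_iff_nonneg_left]
  have key : ∫⁻ x in (fun t => t - R) ⁻¹' A ∩ Ici R, exponentialPDF β x
      = ∫⁻ x in A ∩ Ici 0, exponentialPDF β (x + R) := by
    conv_lhs => rw [← map_add_right_eq_self volume R]
    rw [setLIntegral_map hB hpdf (measurable_add_const R), hpre]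
  have congr1 : ∫⁻ x in A ∩ Ici 0, exponentialPDF β (x + R)
      = ∫⁻ x in A ∩ Ici 0, ENNReal.ofReal (Real.exp (-(β * R))) * exponentialPDF β x := by
    refine setLIntegral_congr_fun (hA.inter measurableSet_Ici) ?_
    rintro x ⟨-, hx : (0:ℝ) ≤ x⟩
    dsimp only
    rw [exponentialPDF_of_nonneg (by linarith), exponentialPDF_of_nonneg hx,
      ← ENNReal.ofReal_mul (Real.exp_nonneg _)]
    congr 1
    rw [show -(β*(x+R)) = -(β*R) + -(β*x) by ring, Real.exp_add]
    ring
  have drop : ∫⁻ x in A ∩ Ici 0, exponentialPDF β x = ∫⁻ x in A, exponentialPDF β x := by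
    rw [← lintegral_inter_add_diff (exponentialPDF β) A measurableSet_Ici]
    have : ∫⁻ x in A \ Ici 0, exponentialPDF β x = 0 := by
      rw [setLIntegral_congr_fun (hA.diff measurableSet_Ici)
        (fun x hx => exponentialPDF_of_neg (by
          simpa [Set.mem_diff, Set.mem_Ici, not_le] using hx.2))]
      simp
    rw [this, add_zero]
  rw [expMeasure_apply' hB, expMeasure_apply' hA, key, congr1,
    lintegral_const_mul _ hpdf, drop]

lemma measurable_updateShift {ι : Type*} [Fintype ι] [DecidableEq ι] (x₀ : ι) (R : ℝ) :
    Measurable (fun t : ι → ℝ => Function.update t x₀ (t x₀ - R)) := by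
  refine measurable_pi_lambda _ (fun j => ?_)
  by_cases h : j = x₀
  · subst h
    have h1 : Measurable (fun t : ι → ℝ => t j - R) :=
      (measurable_pi_apply j : Measurable fun t : ι → ℝ => t j).sub_const R
    simpa [Function.update_self] using h1
  · have h1 : Measurable (fun t : ι → ℝ => t j) :=
      (measurable_pi_apply j : Measurable fun t : ι → ℝ => t j)
    simpa [Function.update_apply, h] using h1

lemma pi_shift_apply {ι : Type*} [Fintype ι] [DecidableEq ι] {β R : ℝ}
    (hβ : 0 < β) (hR : 0 ≤ R) (x₀ : ι) {D : Set (ι → ℝ)} (hD : MeasurableSet D) :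
    (Measure.pi fun _ : ι => expMeasure β)
        ((fun t => Function.update t x₀ (t x₀ - R)) ⁻¹' D ∩ {t | R ≤ t x₀})
      = ENNReal.ofReal (Real.exp (-(β * R)))
          * (Measure.pi fun _ : ι => expMeasure β) D := by
  haveI : IsProbabilityMeasure (expMeasure β) := isProbabilityMeasure_expMeasure hβ
  set Φ : (ι → ℝ) → ι → ℝ := fun t => Function.update t x₀ (t x₀ - R) with hΦdef
  have hΦ : Measurable Φ := measurable_updateShift x₀ R
  have hSx : MeasurableSet {t : ι → ℝ | R ≤ t x₀} :=
    measurableSet_le measurable_const (measurable_pi_apply x₀)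
  set c : ℝ≥0∞ := ENNReal.ofReal (Real.exp (-(β * R))) with hc
  set c' : ℝ≥0∞ := ENNReal.ofReal (Real.exp (β * R)) with hc'
  have hcc' : c' * c = 1 := by
    rw [hc, hc', ← ENNReal.ofReal_mul (Real.exp_nonneg _), ← Real.exp_add]
    norm_num
  have key : Measure.pi (fun _ : ι => expMeasure β)
      = c' • Measure.map Φ ((Measure.pi fun _ : ι => expMeasure β).restrict {t | R ≤ t x₀}) := by
    refine Measure.pi_eq (fun s hs => ?_)
    have hbox : MeasurableSet (Set.pi univ s) := MeasurableSet.univ_pi hs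
    rw [Measure.smul_apply, Measure.map_apply hΦ hbox, Measure.restrict_apply (hΦ hbox)]
    have hset : Φ ⁻¹' Set.pi univ s ∩ {t | R ≤ t x₀}
        = Set.pi univ (fun i => if i = x₀ then (fun t => t - R) ⁻¹' s x₀ ∩ Ici R else s i) := by
      ext t
      simp only [Set.mem_inter_iff, Set.mem_preimage, Set.mem_pi, Set.mem_univ, true_implies,
        Set.mem_setOf_eq, hΦdef]
      constructor
      · rintro ⟨h1, h2⟩ i
        by_cases hi : i = x₀
        · subst hi
          rw [if_pos rfl]
          exact ⟨by simpa using h1 i, h2⟩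
        · rw [if_neg hi]
          simpa [hi, Function.update_apply] using h1 i
      · intro h
        have hx := h x₀
        rw [if_pos rfl] at hx
        refine ⟨fun i => ?_, hx.2⟩
        by_cases hi : i = x₀
        · subst hi
          simpa [Function.update_apply] using hx.1
        · have := h i
          rw [if_neg hi] at this
          simpa [hi, Function.update_apply] using this
    rw [hset, Measure.pi_pi]
    rw [← Finset.mul_prod_erase Finset.univ _ (Finset.mem_univ x₀),
      ← Finset.mul_prod_erase Finset.univ (fun i => expMeasure β (s i)) (Finset.mem_univ x₀)]
    have h1 : expMeasure β (if x₀ = x₀ then (fun t => t - R) ⁻¹' s x₀ ∩ Ici R else s x₀)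
        = c * expMeasure β (s x₀) := by
      rw [if_pos rfl, expMeasure_shift hβ hR (hs x₀)]
    have h2 : ∀ i ∈ Finset.univ.erase x₀,
        expMeasure β (if i = x₀ then (fun t => t - R) ⁻¹' s x₀ ∩ Ici R else s i)
          = expMeasure β (s i) := by
      intro i hi
      rw [if_neg (Finset.ne_of_mem_erase hi)]
    rw [h1, Finset.prod_congr rfl h2, smul_eq_mul, ← mul_assoc, ← mul_assoc, hcc', one_mul]
  have h0 : (Measure.pi fun _ : ι => expMeasure β) (Φ ⁻¹' D ∩ {t | R ≤ t x₀})
      = (Measure.map Φ ((Measure.pi fun _ : ι => expMeasure β).restrict {t | R ≤ t x₀})) D := by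
    rw [Measure.map_apply hΦ hD, Measure.restrict_apply (hΦ hD)]
  have h1 : (Measure.pi fun _ : ι => expMeasure β) D
      = c' * (Measure.map Φ ((Measure.pi fun _ : ι => expMeasure β).restrict {t | R ≤ t x₀})) D := by
    conv_lhs => rw [key]
    simp
  rw [h0, h1, ← mul_assoc, mul_comm c c', hcc', one_mul]

lemma expMeasure_singleton (β : ℝ) (x : ℝ) : expMeasure β {x} = 0 := by
  rw [expMeasure, gammaMeasure, withDensity_apply _ (measurableSet_singleton x)]
  exact setLIntegral_measure_zero _ _ (measure_singleton x)

/-- Two independent exponential random variables differ by a given constant with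
probability zero. -/
lemma tie_null {Ω : Type*} [MeasurableSpace Ω] (μ : Measure Ω) [IsProbabilityMeasure μ]
    {X Y : Ω → ℝ} (hX : Measurable X) (hY : Measurable Y) {β : ℝ}
    (hmY : μ.map Y = expMeasure β) (hind : IndepFun X Y μ) (c : ℝ) :
    μ {ω | X ω - Y ω = c} = 0 := by
  have hs : MeasurableSet {p : ℝ × ℝ | p.1 - p.2 = c} :=
    measurableSet_eq_fun (measurable_fst.sub measurable_snd) measurable_const
  have hset : {ω | X ω - Y ω = c} = (fun ω => (X ω, Y ω)) ⁻¹' {p : ℝ × ℝ | p.1 - p.2 = c} := rfl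
  rw [hset, ← Measure.map_apply (hX.prodMk hY) hs,
    (indepFun_iff_map_prod_eq_prod_map_map hX.aemeasurable hY.aemeasurable).mp hind,
    Measure.prod_apply hs]
  have hz : ∀ a : ℝ, (μ.map Y) (Prod.mk a ⁻¹' {p : ℝ × ℝ | p.1 - p.2 = c}) = 0 := by
    intro a
    have h1 : Prod.mk a ⁻¹' {p : ℝ × ℝ | p.1 - p.2 = c} = {a - c} := by
      ext b
      simp only [Set.mem_preimage, Set.mem_setOf_eq, Set.mem_singleton_iff]
      constructor <;> intro h <;> linarith
    rw [h1, hmY, expMeasure_singleton]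
  simp only [hz, lintegral_zero]

lemma map_eq_pi {Ω V : Type*} [MeasurableSpace Ω] (μ : Measure Ω) [IsProbabilityMeasure μ]
    (U : Finset V) {β : ℝ} (hβ : 0 < β) (T : V → Ω → ℝ) (hmeas : ∀ x : V, Measurable (T x))
    (hdist : ∀ x ∈ U, μ.map (T x) = expMeasure β)
    (hindep : iIndepFun (fun x : {y : V // y ∈ U} => T x.1) μ) :
    Measure.pi (fun _ : {y : V // y ∈ U} => expMeasure β)
      = μ.map (fun ω (i : {y : V // y ∈ U}) => T i.1 ω) := by
  haveI : IsProbabilityMeasure (expMeasure β) := isProbabilityMeasure_expMeasure hβ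
  have hF : Measurable (fun ω (i : {y : V // y ∈ U}) => T i.1 ω) :=
    measurable_pi_lambda _ (fun i => hmeas i.1)
  refine Measure.pi_eq (fun s hs => ?_)
  rw [Measure.map_apply hF (MeasurableSet.univ_pi hs)]
  have hpre : (fun ω (i : {y : V // y ∈ U}) => T i.1 ω) ⁻¹' (Set.pi univ s)
      = ⋂ i ∈ Finset.univ, (fun ω => T (i : {y : V // y ∈ U}).1 ω) ⁻¹' s i := by
    ext ω
    simp [Set.mem_pi]
  rw [hpre, hindep.measure_inter_preimage_eq_mul Finset.univ (fun i _ => hs i)]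
  refine Finset.prod_congr rfl (fun i _ => ?_)
  rw [← Measure.map_apply (hmeas i.1) (hs i), hdist i.1 i.2]

end Aux

lemma score_eq_coe {V Ω : Type*} (d : V → V → ℝ≥0∞) (T : V → Ω → ℝ) {x w : V}
    (hx : d x w ≠ ⊤) (ω : Ω) :
    score d T x w ω = ((T x ω - (d x w).toReal : ℝ) : EReal) := by
  have h : ((d x w : ℝ≥0∞) : EReal) = (((d x w).toReal : ℝ) : EReal) := by
    conv_lhs => rw [← ENNReal.ofReal_toReal hx]
    rw [EReal.coe_ennreal_ofReal, max_eq_left ENNReal.toReal_nonneg]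
  rw [score, h, ← EReal.coe_sub]

lemma score_top {V Ω : Type*} (d : V → V → ℝ≥0∞) (T : V → Ω → ℝ) {x w : V}
    (hx : d x w = ⊤) (ω : Ω) : score d T x w ω = ⊥ := by
  rw [score, hx, EReal.coe_ennreal_top, EReal.sub_top]

/-- **Close vertices are separated with small probability.**
For the exponential-clustering rule with independent `Exp(β)` radii,
`β = (log s)/r`, any two vertices `u, v` at round-trip distance at most `R`
end up in the same cluster (assigned to a common center, or both unassigned)
with probability at least `e^{-βR} = s^{-R/r}`. -/
theorem same_cluster_probability
    {Ω : Type*} [MeasurableSpace Ω] (μ : Measure Ω) [IsProbabilityMeasure μ]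
    {V : Type*} [Fintype V] (U : Finset V) (hUne : U.Nonempty)
    (d : V → V → ℝ≥0∞) (htri : ∀ x y z : V, d x z ≤ d x y + d y z)
    (r R s β : ℝ) (hr : 0 < r) (hR : 0 < R) (hs : 2 ≤ s)
    (hβ : β = Real.log s / r)
    (T : V → Ω → ℝ) (hmeas : ∀ x : V, Measurable (T x))
    (hdist : ∀ x ∈ U, μ.map (T x) = expMeasure β)
    (hindep : iIndepFun
      (fun x : {y : V // y ∈ U} => T x.1) μ)
    (u v : V) (huv : d u v + d v u ≤ ENNReal.ofReal R) :
    ENNReal.ofReal (Real.exp (-β * R)) ≤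
      μ {ω | (∃ x ∈ U, AssignedTo U d T x u ω ∧ AssignedTo U d T x v ω) ∨
             (Unassigned U d T u ω ∧ Unassigned U d T v ω)} := by
  classical
  have hβpos : 0 < β := by
    rw [hβ]
    exact div_pos (Real.log_pos (by linarith)) hr
  haveI : IsProbabilityMeasure (expMeasure β) := isProbabilityMeasure_expMeasure hβpos
  set F : Ω → {y : V // y ∈ U} → ℝ := fun ω i => T i.1 ω with hFdef
  have hF : Measurable F := measurable_pi_lambda _ (fun i => hmeas i.1)
  set π : Measure ({y : V // y ∈ U} → ℝ) := Measure.pi (fun _ => expMeasure β) with hπ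
  have hmapF : π = μ.map F := map_eq_pi μ U hβpos T hmeas hdist hindep
  haveI : IsProbabilityMeasure π := by
    rw [hmapF]; exact Measure.isProbabilityMeasure_map hF.aemeasurable
  -- real distances
  set a : {y : V // y ∈ U} → ℝ := fun i => (d i.1 u).toReal with ha
  set b : {y : V // y ∈ U} → ℝ := fun i => (d i.1 v).toReal with hb
  set m : {y : V // y ∈ U} → ℝ := fun i => min (a i) (b i) with hm
  set S' : Finset {y : V // y ∈ U} := Finset.univ.filter (fun i => d i.1 u ≠ ⊤) with hS'
  have hduvle : d u v ≤ ENNReal.ofReal R := le_trans (self_le_add_right _ _) huv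
  have hdvule : d v u ≤ ENNReal.ofReal R := le_trans (le_add_self) huv
  have hduv : d u v ≠ ⊤ := ne_top_of_le_ne_top ENNReal.ofReal_ne_top hduvle
  have hdvu : d v u ≠ ⊤ := ne_top_of_le_ne_top ENNReal.ofReal_ne_top hdvule
  have htsum : (d u v).toReal + (d v u).toReal ≤ R := by
    rw [← ENNReal.toReal_add hduv hdvu]
    exact ENNReal.toReal_le_of_le_ofReal hR.le huv
  have htuv0 : 0 ≤ (d u v).toReal := ENNReal.toReal_nonneg
  have htvu0 : 0 ≤ (d v u).toReal := ENNReal.toReal_nonneg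
  have hmemS' : ∀ i : {y : V // y ∈ U}, i ∈ S' ↔ d i.1 u ≠ ⊤ := by
    intro i; simp [hS']
  have hfinv : ∀ i : {y : V // y ∈ U}, i ∈ S' → d i.1 v ≠ ⊤ := by
    intro i hi
    have hu : d i.1 u ≠ ⊤ := (hmemS' i).mp hi
    exact ne_top_of_le_ne_top (by
      rw [ENNReal.add_ne_top]; exact ⟨hu, hduv⟩) (htri i.1 u v)
  have hfinu : ∀ i : {y : V // y ∈ U}, d i.1 v ≠ ⊤ → i ∈ S' := by
    intro i hv
    refine (hmemS' i).mpr (ne_top_of_le_ne_top (by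
      rw [ENNReal.add_ne_top]; exact ⟨hv, hdvu⟩) (htri i.1 v u))
  have hm0 : ∀ i, 0 ≤ m i := fun i => le_min ENNReal.toReal_nonneg ENNReal.toReal_nonneg
  have hma : ∀ i, m i ≤ a i := fun i => min_le_left _ _
  have hmb : ∀ i, m i ≤ b i := fun i => min_le_right _ _
  have haR : ∀ i ∈ S', a i ≤ m i + R := by
    intro i hi
    have hv := hfinv i hi
    have h2 : a i ≤ b i + (d v u).toReal := by
      have h1 := ENNReal.toReal_mono (by rw [ENNReal.add_ne_top]; exact ⟨hv, hdvu⟩)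
        (htri i.1 v u)
      rwa [ENNReal.toReal_add hv hdvu] at h1
    rcases le_total (a i) (b i) with h | h
    · have : m i = a i := min_eq_left h
      linarith
    · have : m i = b i := min_eq_right h
      linarith
  have hbR : ∀ i ∈ S', b i ≤ m i + R := by
    intro i hi
    have hu := (hmemS' i).mp hi
    have h2 : b i ≤ a i + (d u v).toReal := by
      have h1 := ENNReal.toReal_mono (by rw [ENNReal.add_ne_top]; exact ⟨hu, hduv⟩)
        (htri i.1 u v)
      rwa [ENNReal.toReal_add hu hduv] at h1
    rcases le_total (b i) (a i) with h | h
    · have : m i = b i := min_eq_right h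
      linarith
    · have : m i = a i := min_eq_left h
      linarith
  -- events on the product space
  set D : {y : V // y ∈ U} → Set ({y : V // y ∈ U} → ℝ) :=
    fun x => {t | 0 < t x - m x ∧ ∀ y ∈ S'.erase x, t y - m y < t x - m x} with hD
  set G1 : {y : V // y ∈ U} → Set ({y : V // y ∈ U} → ℝ) :=
    fun x => {t | R < t x - m x ∧ ∀ y ∈ S'.erase x, t y - m y + R < t x - m x} with hG1
  set G2 : Set ({y : V // y ∈ U} → ℝ) := {t | ∀ y ∈ S', t y - m y ≤ 0} with hG2
  have hWm : ∀ i : {y : V // y ∈ U}, Measurable (fun t : {y : V // y ∈ U} → ℝ => t i - m i) :=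
    fun i => (measurable_pi_apply i).sub_const _
  have hDm : ∀ x, MeasurableSet (D x) := by
    intro x
    have : D x = {t | 0 < t x - m x} ∩ ⋂ y ∈ S'.erase x, {t | t y - m y < t x - m x} := by
      ext t; simp [hD, Set.mem_iInter]
    rw [this]
    exact (measurableSet_lt measurable_const (hWm x)).inter
      (MeasurableSet.biInter (S'.erase x).countable_toSet
        (fun y _ => measurableSet_lt (hWm y) (hWm x)))
  have hG1m : ∀ x, MeasurableSet (G1 x) := by
    intro x
    have : G1 x = {t | R < t x - m x} ∩ ⋂ y ∈ S'.erase x, {t | t y - m y + R < t x - m x} := by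
      ext t; simp [hG1, Set.mem_iInter]
    rw [this]
    exact (measurableSet_lt measurable_const (hWm x)).inter
      (MeasurableSet.biInter (S'.erase x).countable_toSet
        (fun y _ => measurableSet_lt ((hWm y).add_const _) (hWm x)))
  have hG2m : MeasurableSet G2 := by
    have : G2 = ⋂ y ∈ S', {t | t y - m y ≤ 0} := by
      ext t; simp [hG2, Set.mem_iInter]
    rw [this]
    exact MeasurableSet.biInter S'.countable_toSet
      (fun y _ => measurableSet_le (hWm y) measurable_const)
  -- shift identity
  have hG1D : ∀ x ∈ S', π (G1 x) = ENNReal.ofReal (Real.exp (-(β * R))) * π (D x) := by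
    intro x _
    have hset : G1 x = (fun t => Function.update t x (t x - R)) ⁻¹' (D x) ∩ {t | R ≤ t x} := by
      ext t
      simp only [hG1, hD, Set.mem_inter_iff, Set.mem_preimage, Set.mem_setOf_eq]
      constructor
      · rintro ⟨h1, h2⟩
        have hRtx : R ≤ t x := by have := hm0 x; linarith
        refine ⟨⟨?_, ?_⟩, hRtx⟩
        · rw [Function.update_self]; linarith
        · intro y hy
          have hyx : y ≠ x := Finset.ne_of_mem_erase hy
          rw [Function.update_of_ne hyx, Function.update_self]
          have := h2 y hy; linarith
      · rintro ⟨⟨h1, h2⟩, _⟩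
        rw [Function.update_self] at h1
        refine ⟨by linarith, fun y hy => ?_⟩
        have hyx : y ≠ x := Finset.ne_of_mem_erase hy
        have := h2 y hy
        rw [Function.update_of_ne hyx, Function.update_self] at this
        linarith
    rw [hset]
    exact pi_shift_apply hβpos hR.le x (hDm x)
  -- ties are null
  have htie : ∀ x ∈ S', ∀ y ∈ S'.erase x,
      π {t : {y : V // y ∈ U} → ℝ | t x - m x = t y - m y} = 0 := by
    intro x _ y hy
    have hyx : y ≠ x := Finset.ne_of_mem_erase hy
    have hms : MeasurableSet {t : {y : V // y ∈ U} → ℝ | t x - m x = t y - m y} :=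
      measurableSet_eq_fun (hWm x) (hWm y)
    rw [hmapF, Measure.map_apply hF hms]
    have hpre : F ⁻¹' {t : {y : V // y ∈ U} → ℝ | t x - m x = t y - m y}
        = {ω | T x.1 ω - T y.1 ω = m x - m y} := by
      ext ω
      simp only [Set.mem_preimage, Set.mem_setOf_eq, hFdef]
      constructor <;> intro h <;> linarith
    rw [hpre]
    exact tie_null μ (hmeas x.1) (hmeas y.1) (hdist y.1 y.2)
      (hindep.indepFun (Ne.symm hyx)) _
  -- covering
  have hsum : (1 : ℝ≥0∞) ≤ π G2 + ∑ x ∈ S', π (D x) := by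
    set N : Set ({y : V // y ∈ U} → ℝ) :=
      ⋃ x ∈ S', ⋃ y ∈ S'.erase x, {t | t x - m x = t y - m y} with hN
    have hNnull : π N = 0 := by
      refine le_antisymm ?_ (by simp)
      calc π N ≤ ∑ x ∈ S', π (⋃ y ∈ S'.erase x, {t | t x - m x = t y - m y}) :=
            measure_biUnion_finset_le _ _
        _ ≤ ∑ x ∈ S', ∑ y ∈ S'.erase x, π {t | t x - m x = t y - m y} :=
            Finset.sum_le_sum (fun x _ => measure_biUnion_finset_le _ _)
        _ = 0 := by
            refine Finset.sum_eq_zero (fun x hx => Finset.sum_eq_zero (fun y hy => ?_))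
            exact htie x hx y hy
    have hcover : (Set.univ : Set ({y : V // y ∈ U} → ℝ)) ⊆ (G2 ∪ ⋃ x ∈ S', D x) ∪ N := by
      intro t _
      by_cases hg2 : t ∈ G2
      · exact Or.inl (Or.inl hg2)
      · have hex : ∃ y ∈ S', ¬(t y - m y ≤ 0) := by
          by_contra h
          push_neg at h
          exact hg2 (fun y hy => (h y hy))
        obtain ⟨y0, hy0S, hy0⟩ := hex
        obtain ⟨x, hxS, hmax⟩ := S'.exists_max_image (fun i => t i - m i) ⟨y0, hy0S⟩
        by_cases hDx : t ∈ D x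
        · exact Or.inl (Or.inr (Set.mem_biUnion hxS hDx))
        · have h0 : 0 < t x - m x := lt_of_lt_of_le (not_le.mp hy0) (hmax y0 hy0S)
          have hz : ∃ z ∈ S'.erase x, ¬(t z - m z < t x - m x) := by
            by_contra h
            push_neg at h
            exact hDx ⟨h0, fun z hz => h z hz⟩
          obtain ⟨z, hzE, hzle⟩ := hz
          have hzS : z ∈ S' := Finset.mem_of_mem_erase hzE
          have heq : t x - m x = t z - m z :=
            le_antisymm (not_lt.mp hzle) (hmax z hzS)
          exact Or.inr (Set.mem_biUnion hxS (Set.mem_biUnion hzE heq))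
    calc (1 : ℝ≥0∞) = π Set.univ := (measure_univ).symm
      _ ≤ π ((G2 ∪ ⋃ x ∈ S', D x) ∪ N) := measure_mono hcover
      _ ≤ π (G2 ∪ ⋃ x ∈ S', D x) + π N := measure_union_le _ _
      _ = π (G2 ∪ ⋃ x ∈ S', D x) := by rw [hNnull, add_zero]
      _ ≤ π G2 + π (⋃ x ∈ S', D x) := measure_union_le _ _
      _ ≤ π G2 + ∑ x ∈ S', π (D x) := add_le_add le_rfl (measure_biUnion_finset_le _ _)
  -- disjoint union of good events
  have hdisjG : π (G2 ∪ ⋃ x ∈ S', G1 x) = π G2 + ∑ x ∈ S', π (G1 x) := by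
    have hdis : Disjoint G2 (⋃ x ∈ S', G1 x) := by
      rw [Set.disjoint_left]
      intro t ht hun
      obtain ⟨x, hxS, hx⟩ := Set.mem_iUnion₂.mp hun
      have h1 : t x - m x ≤ 0 := ht x hxS
      have h2 : R < t x - m x := hx.1
      linarith
    have hpair : (S' : Set {y : V // y ∈ U}).PairwiseDisjoint G1 := by
      intro x hx y hy hxy
      rw [Function.onFun, Set.disjoint_left]
      intro t htx hty
      have h1 := htx.2 y (Finset.mem_erase.mpr ⟨fun h => hxy h.symm, hy⟩)
      have h2 := hty.2 x (Finset.mem_erase.mpr ⟨fun h => hxy h, hx⟩)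
      have := htx.1
      linarith
    rw [measure_union hdis (MeasurableSet.biUnion S'.countable_toSet
      (fun x _ => hG1m x)), measure_biUnion_finset hpair (fun x _ => hG1m x)]
  -- main estimate
  set c : ℝ≥0∞ := ENNReal.ofReal (Real.exp (-(β * R))) with hc
  have hc1 : c ≤ 1 := by
    rw [hc, ← ENNReal.ofReal_one]
    exact ENNReal.ofReal_le_ofReal (Real.exp_le_one_iff.mpr (by nlinarith))
  have hmain : c ≤ π (G2 ∪ ⋃ x ∈ S', G1 x) := by
    calc c = c * 1 := (mul_one c).symm
      _ ≤ c * (π G2 + ∑ x ∈ S', π (D x)) := mul_le_mul_right hsum c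
      _ = c * π G2 + ∑ x ∈ S', c * π (D x) := by rw [mul_add, Finset.mul_sum]
      _ ≤ π G2 + ∑ x ∈ S', π (G1 x) := by
          refine add_le_add ?_ (Finset.sum_le_sum (fun x hx => le_of_eq (hG1D x hx).symm))
          calc c * π G2 ≤ 1 * π G2 := mul_le_mul_left hc1 _
            _ = π G2 := one_mul _
      _ = π (G2 ∪ ⋃ x ∈ S', G1 x) := hdisjG.symm
  -- inclusion into the target event
  have hincl : F ⁻¹' (G2 ∪ ⋃ x ∈ S', G1 x) ⊆
      {ω | (∃ x ∈ U, AssignedTo U d T x u ω ∧ AssignedTo U d T x v ω) ∨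
           (Unassigned U d T u ω ∧ Unassigned U d T v ω)} := by
    intro ω hω
    simp only [Set.mem_preimage, Set.mem_union] at hω
    rcases hω with hg2 | hun
    · -- both unassigned
      refine Or.inr ⟨?_, ?_⟩
      · intro x hxU
        by_cases hx : d x u = ⊤
        · rw [score_top d T hx ω]; exact bot_le
        · have hiS : (⟨x, hxU⟩ : {y : V // y ∈ U}) ∈ S' := (hmemS' _).mpr hx
          have h1 : T x ω - m ⟨x, hxU⟩ ≤ 0 := hg2 _ hiS
          rw [score_eq_coe d T hx ω]
          exact EReal.coe_nonpos.mpr (by have := hma ⟨x, hxU⟩; simp only [ha] at *; linarith)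
      · intro x hxU
        by_cases hx : d x v = ⊤
        · rw [score_top d T hx ω]; exact bot_le
        · have hiS : (⟨x, hxU⟩ : {y : V // y ∈ U}) ∈ S' := hfinu _ hx
          have h1 : T x ω - m ⟨x, hxU⟩ ≤ 0 := hg2 _ hiS
          rw [score_eq_coe d T hx ω]
          exact EReal.coe_nonpos.mpr (by have := hmb ⟨x, hxU⟩; simp only [hb] at *; linarith)
    · obtain ⟨x, hxS, hx⟩ := Set.mem_iUnion₂.mp hun
      obtain ⟨h1, h2⟩ := hx
      have hxu : d x.1 u ≠ ⊤ := (hmemS' x).mp hxS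
      have hxv : d x.1 v ≠ ⊤ := hfinv x hxS
      have haxR : a x ≤ m x + R := haR x hxS
      have hbxR : b x ≤ m x + R := hbR x hxS
      refine Or.inl ⟨x.1, x.2, ⟨x.2, ?_, ?_⟩, ⟨x.2, ?_, ?_⟩⟩
      · rw [score_eq_coe d T hxu ω]
        exact EReal.coe_pos.mpr (by simp only [ha] at *; linarith)
      · intro y hyU
        by_cases hy : d y u = ⊤
        · rw [score_top d T hy ω]; exact bot_le
        · have hjS : (⟨y, hyU⟩ : {y : V // y ∈ U}) ∈ S' := (hmemS' _).mpr hy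
          rcases eq_or_ne (⟨y, hyU⟩ : {y : V // y ∈ U}) x with heq | hne
          · have : y = x.1 := by rw [← heq]
            subst this
            exact le_refl _
          · have hyE : (⟨y, hyU⟩ : {y : V // y ∈ U}) ∈ S'.erase x :=
              Finset.mem_erase.mpr ⟨hne, hjS⟩
            have h3 := h2 _ hyE
            rw [score_eq_coe d T hy ω, score_eq_coe d T hxu ω]
            refine EReal.coe_le_coe_iff.mpr ?_
            have h4 := hma ⟨y, hyU⟩
            simp only [ha] at *
            linarith
      · rw [score_eq_coe d T hxv ω]
        exact EReal.coe_pos.mpr (by simp only [hb] at *; linarith)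
      · intro y hyU
        by_cases hy : d y v = ⊤
        · rw [score_top d T hy ω]; exact bot_le
        · have hjS : (⟨y, hyU⟩ : {y : V // y ∈ U}) ∈ S' := hfinu _ hy
          rcases eq_or_ne (⟨y, hyU⟩ : {y : V // y ∈ U}) x with heq | hne
          · have : y = x.1 := by rw [← heq]
            subst this
            exact le_refl _
          · have hyE : (⟨y, hyU⟩ : {y : V // y ∈ U}) ∈ S'.erase x :=
              Finset.mem_erase.mpr ⟨hne, hjS⟩
            have h3 := h2 _ hyE
            rw [score_eq_coe d T hy ω, score_eq_coe d T hxv ω]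
            refine EReal.coe_le_coe_iff.mpr ?_
            have h4 := hmb ⟨y, hyU⟩
            simp only [hb] at *
            linarith
  -- conclusion
  have hGm : MeasurableSet (G2 ∪ ⋃ x ∈ S', G1 x) :=
    hG2m.union (MeasurableSet.biUnion S'.countable_toSet (fun x _ => hG1m x))
  calc ENNReal.ofReal (Real.exp (-β * R)) = c := by rw [hc, neg_mul]
    _ ≤ π (G2 ∪ ⋃ x ∈ S', G1 x) := hmain
    _ = μ (F ⁻¹' (G2 ∪ ⋃ x ∈ S', G1 x)) := by rw [hmapF, Measure.map_apply hF hGm]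
    _ ≤ μ _ := measure_mono hincl
end
end

section
/- Let G = (V,E,W) be a weighted directed graph with n ≥ 2 vertices whose edge weights all lie in [1, w], let S ⊆ V, let β ≥ 1 be a real, and set L = ⌈log₂(2nw)⌉. For each i = 1, …, L, let 𝒞_i be an S-sourcewise (β, 2^i)-cover of G, and for each ball B of 𝒞_i fix a center x_B ∈ B such that d_{G[B]}(x_B ⇄ y) ≤ β·2^i for every y ∈ B. Let H be a subgraph of G such that for every such ball B and every y ∈ B, d_H(x_B, y) ≤ d_{G[B]}(x_B, y) and d_H(y, x_B) ≤ d_{G[B]}(y, x_B). Then H is an S-sourcewise 4β-roundtrip spanner of G. Moreover, if H is taken to be exactly the union, over all balls B of all the covers 𝒞_i, of a shortest-path out-tree from x_B to all vertices of B and a shortest-path in-tree from all vertices of B to x_B in G[B], and if every vertex of V lies in at most μ balls of each 𝒞_i, then H has at most 2·μ·n·L edges. -/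
open scoped ENNReal

noncomputable section

/-- The one-way distance from `u` to `v` in the subgraph induced by the vertex
set `B`. -/
def inducedGdist {V : Type*} (E : Set (V × V)) (W : V × V → ℝ) (B : Set V)
    (u v : V) : ℝ≥0∞ :=
  gdist (E ∩ B ×ˢ B) W u v

/-- `T` is a shortest-path out-tree from `x` to all vertices of `B` in the
subgraph of `(V, E, W)` induced by `B`: its edges are induced edges, every
vertex has in-degree at most one in `T`, the root `x` has in-degree zero, and
`T` realizes the induced distances from `x` to every vertex of `B`. -/
def IsSPOutTree {V : Type*} [DecidableEq V] (E : Finset (V × V))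
    (W : V × V → ℝ) (B : Finset V) (x : V) (T : Finset (V × V)) : Prop :=
  T ⊆ E.filter (fun e => e.1 ∈ B ∧ e.2 ∈ B) ∧
  (∀ v : V, (T.filter (fun e => e.2 = v)).card ≤ 1) ∧
  (∀ e ∈ T, e.2 ≠ x) ∧
  (∀ y ∈ B, gdist (↑T) W x y = inducedGdist (↑E) W (↑B) x y)

/-- `T` is a shortest-path in-tree from all vertices of `B` to `x` in the
subgraph of `(V, E, W)` induced by `B`. -/
def IsSPInTree {V : Type*} [DecidableEq V] (E : Finset (V × V))
    (W : V × V → ℝ) (B : Finset V) (x : V) (T : Finset (V × V)) : Prop :=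
  T ⊆ E.filter (fun e => e.1 ∈ B ∧ e.2 ∈ B) ∧
  (∀ v : V, (T.filter (fun e => e.1 = v)).card ≤ 1) ∧
  (∀ e ∈ T, e.1 ≠ x) ∧
  (∀ y ∈ B, gdist (↑T) W y x = inducedGdist (↑E) W (↑B) y x)

section Helpers

variable {V : Type*} {E E₁ E₂ : Set (V × V)} {W : V × V → ℝ} {u v m : V}

lemma gdist_le {l : List V} (h : IsWalk E u v l) : gdist E W u v ≤ walkCost W l :=
  iInf₂_le l h

lemma gdist_self (u : V) : gdist E W u u = 0 := by
  refine le_antisymm ?_ (zero_le)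
  have h : IsWalk E u u [u] := ⟨List.isChain_singleton u, rfl, rfl⟩
  simpa [walkCost] using gdist_le (W := W) h

lemma walkCost_append {l₂ : List V} (h2 : l₂.head? = some m) :
    ∀ l₁ : List V, l₁.getLast? = some m →
      walkCost W (l₁ ++ l₂.tail) = walkCost W l₁ + walkCost W l₂ := by
  intro l₁
  induction l₁ with
  | nil => simp
  | cons a t ih =>
    cases t with
    | nil =>
      intro h1
      cases l₂ with
      | nil => simp at h2
      | cons c t2 =>
        simp only [List.getLast?_singleton, Option.some.injEq] at h1
        simp only [List.head?_cons, Option.some.injEq] at h2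
        subst h1; subst h2
        simp [walkCost]
    | cons b t' =>
      intro h1
      rw [List.getLast?_cons_cons] at h1
      have key := ih h1
      show walkCost W (a :: b :: (t' ++ l₂.tail)) = _
      rw [show walkCost W (a :: b :: (t' ++ l₂.tail)) =
        ENNReal.ofReal (W (a, b)) + walkCost W (b :: (t' ++ l₂.tail)) from rfl]
      rw [show (b :: (t' ++ l₂.tail)) = (b :: t') ++ l₂.tail from rfl, key]
      rw [show walkCost W (a :: b :: t') =
        ENNReal.ofReal (W (a, b)) + walkCost W (b :: t') from rfl, add_assoc]

lemma IsWalk.append {l₁ l₂ : List V} (h1 : IsWalk E u m l₁) (h2 : IsWalk E m v l₂) :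
    IsWalk E u v (l₁ ++ l₂.tail) := by
  obtain ⟨c1, hh1, hl1⟩ := h1
  obtain ⟨c2, hh2, hl2⟩ := h2
  cases l₂ with
  | nil => simp at hh2
  | cons c t =>
    simp only [List.head?_cons, Option.some.injEq] at hh2
    subst hh2
    cases t with
    | nil =>
      simp only [List.getLast?_singleton, Option.some.injEq] at hl2
      subst hl2
      exact ⟨by simpa using c1, by simpa using hh1, by simpa using hl1⟩
    | cons d t' =>
      refine ⟨?_, ?_, ?_⟩
      · rw [show (c :: d :: t').tail = d :: t' from rfl, List.Chain', List.isChain_append]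
        exact ⟨c1, c2.tail, by
          intro x hx y hy
          rw [hl1] at hx
          simp only [Option.mem_def, Option.some.injEq] at hx
          simp only [List.head?_cons, Option.mem_def, Option.some.injEq] at hy
          subst hx; subst hy
          exact (List.isChain_cons_cons.mp c2).1⟩
      · rw [List.head?_append, hh1]; rfl
      · rw [show (c :: d :: t').tail = d :: t' from rfl, List.getLast?_append]
        rw [show (c :: d :: t').getLast? = (d :: t').getLast? from List.getLast?_cons_cons ..] at hl2
        rw [hl2]; rfl

lemma gdist_triangle (u m v : V) :
    gdist E W u v ≤ gdist E W u m + gdist E W m v := by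
  rw [show gdist E W u m + gdist E W m v
      = ⨅ (l₁ : List V) (_ : IsWalk E u m l₁) (l₂ : List V) (_ : IsWalk E m v l₂),
          (walkCost W l₁ + walkCost W l₂) by
    rw [gdist, gdist]
    rw [ENNReal.iInf_add]
    refine iInf_congr fun l₁ => ?_
    rw [ENNReal.iInf_add]
    refine iInf_congr fun h1 => ?_
    rw [ENNReal.add_iInf]
    refine iInf_congr fun l₂ => ?_
    rw [ENNReal.add_iInf]]
  refine le_iInf₂ fun l₁ h1 => le_iInf₂ fun l₂ h2 => ?_
  exact (gdist_le (h1.append h2)).trans_eq (walkCost_append h2.2.1 l₁ h1.2.2)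

lemma gdist_anti (h : E₁ ⊆ E₂) (u v : V) : gdist E₂ W u v ≤ gdist E₁ W u v :=
  le_iInf₂ fun l hl => iInf₂_le l ⟨hl.1.imp fun _ _ hab => h hab, hl.2⟩

lemma one_le_walkCost (hW1 : ∀ e ∈ E, 1 ≤ W e) (huv : u ≠ v) {l : List V}
    (h : IsWalk E u v l) : ENNReal.ofReal 1 ≤ walkCost W l := by
  obtain ⟨hc, hh, hl⟩ := h
  match l with
  | [] => simp at hh
  | [a] =>
    simp only [List.head?_cons, Option.some.injEq] at hh
    simp only [List.getLast?_singleton, Option.some.injEq] at hl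
    exact absurd (hh.symm.trans hl) huv
  | a :: b :: t =>
    have hab : (a, b) ∈ E := (List.isChain_cons_cons.mp hc).1
    calc ENNReal.ofReal 1 ≤ ENNReal.ofReal (W (a, b)) :=
          ENNReal.ofReal_le_ofReal (hW1 _ hab)
      _ ≤ _ := le_add_right le_rfl

lemma walkCost_le_of_chain {w : ℝ} (hw : 0 ≤ w) (hWle : ∀ e ∈ E, W e ≤ w) :
    ∀ l : List V, l.Chain' (fun a b => (a, b) ∈ E) →
      walkCost W l ≤ ENNReal.ofReal ((l.length - 1 : ℕ) * w)
  | [] => fun _ => by simp [walkCost]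
  | [a] => fun _ => by simp [walkCost]
  | a :: b :: t => fun hc => by
    have hab : (a, b) ∈ E := (List.isChain_cons_cons.mp hc).1
    have ih := walkCost_le_of_chain hw hWle (b :: t) (List.isChain_cons_cons.mp hc).2
    show ENNReal.ofReal (W (a, b)) + walkCost W (b :: t) ≤ _
    calc ENNReal.ofReal (W (a, b)) + walkCost W (b :: t)
        ≤ ENNReal.ofReal w + ENNReal.ofReal (((b :: t).length - 1 : ℕ) * w) :=
          add_le_add (ENNReal.ofReal_le_ofReal (hWle _ hab)) ih
      _ = ENNReal.ofReal (w + ((b :: t).length - 1 : ℕ) * w) :=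
          (ENNReal.ofReal_add hw (mul_nonneg (Nat.cast_nonneg _) hw)).symm
      _ ≤ _ := by
          apply ENNReal.ofReal_le_ofReal
          simp only [List.length_cons, Nat.add_sub_cancel]
          push_cast
          ring_nf
          nlinarith [hw]

lemma walkCost_tail_le (l : List V) : walkCost W l.tail ≤ walkCost W l := by
  match l with
  | [] => simp
  | [a] => simp [walkCost]
  | a :: b :: t =>
    show walkCost W (b :: t) ≤ ENNReal.ofReal (W (a, b)) + walkCost W (b :: t)
    exact le_add_self

lemma walkCost_drop_le (k : ℕ) (l : List V) : walkCost W (l.drop k) ≤ walkCost W l := by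
  induction k with
  | zero => simp
  | succ k ih =>
    rw [← List.tail_drop]
    exact (walkCost_tail_le _).trans ih

lemma exists_nodup_walk :
    ∀ (n : ℕ) (l : List V), l.length = n → IsWalk E u v l →
      ∃ l', IsWalk E u v l' ∧ l'.Nodup ∧ walkCost W l' ≤ walkCost W l := by
  intro n
  induction n using Nat.strong_induction_on with
  | _ n ih =>
    intro l hlen hl
    by_cases hnd : l.Nodup
    · exact ⟨l, hl, hnd, le_rfl⟩
    · rw [List.nodup_iff_injective_get] at hnd
      rw [Function.not_injective_iff] at hnd
      obtain ⟨i, j, heq, hne⟩ := hnd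
      -- wlog i < j
      wlog hij : (i : ℕ) < (j : ℕ) generalizing i j
      · have hne' : (i : ℕ) ≠ (j : ℕ) := Fin.val_ne_of_ne hne
        exact this j i heq.symm hne.symm (by omega)
      have hi : (i:ℕ) < l.length := i.isLt
      have hj : (j:ℕ) < l.length := j.isLt
      have h1 : IsWalk E u (l.get i) (l.take ((i:ℕ)+1)) := by
        refine ⟨hl.1.prefix (List.take_prefix _ _), ?_, ?_⟩
        · cases l with
          | nil => exact absurd hi (by simp)
          | cons a t =>
            rw [List.take_succ_cons, List.head?_cons]
            exact hl.2.1
        · rw [List.take_succ, List.getElem?_eq_getElem hi]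
          rw [show l[(i:ℕ)]'hi = l.get i from rfl]
          exact List.getLast?_concat
      have h2 : IsWalk E (l.get j) v (l.drop (j:ℕ)) := by
        refine ⟨hl.1.suffix (List.drop_suffix _ _), ?_, ?_⟩
        · rw [List.head?_drop, List.getElem?_eq_getElem hj]
          rfl
        · have hv := hl.2.2
          rw [← List.take_append_drop (j:ℕ) l, List.getLast?_append] at hv
          cases hcase : (l.drop (j:ℕ)).getLast? with
          | none =>
            rw [List.getLast?_eq_none_iff] at hcase
            have := congrArg List.length hcase
            simp at this
            omega
          | some z =>
            rw [hcase] at hv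
            exact hv
      have hlast_take : (l.take ((i:ℕ)+1)).getLast? = some (l.get i) := h1.2.2
      have hhead_dropi : (l.drop (i:ℕ)).head? = some (l.get i) := by
        rw [List.head?_drop, List.getElem?_eq_getElem hi]
        rfl
      have hhead_dropj : (l.drop (j:ℕ)).head? = some (l.get j) := h2.2.1
      have hcost_l : walkCost W l
          = walkCost W (l.take ((i:ℕ)+1)) + walkCost W (l.drop (i:ℕ)) := by
        have h := walkCost_append (W := W) hhead_dropi (l.take ((i:ℕ)+1)) hlast_take
        rw [List.tail_drop, List.take_append_drop] at h
        exact h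
      have hlast_take' : (l.take ((i:ℕ)+1)).getLast? = some (l.get j) := heq ▸ hlast_take
      have hwalk' : IsWalk E u v (l.take ((i:ℕ)+1) ++ (l.drop (j:ℕ)).tail) :=
        IsWalk.append (heq ▸ h1) h2
      have hcost' : walkCost W (l.take ((i:ℕ)+1) ++ (l.drop (j:ℕ)).tail)
          = walkCost W (l.take ((i:ℕ)+1)) + walkCost W (l.drop (j:ℕ)) :=
        walkCost_append hhead_dropj _ hlast_take'
      have hdropji : l.drop (j:ℕ) = (l.drop (i:ℕ)).drop ((j:ℕ) - (i:ℕ)) := by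
        rw [List.drop_drop]; congr 1; omega
      have hcost_le : walkCost W (l.take ((i:ℕ)+1) ++ (l.drop (j:ℕ)).tail) ≤ walkCost W l := by
        rw [hcost', hcost_l]
        refine add_le_add le_rfl ?_
        rw [hdropji]
        exact walkCost_drop_le _ _
      have hlen' : (l.take ((i:ℕ)+1) ++ (l.drop (j:ℕ)).tail).length < n := by
        simp only [List.length_append, List.length_take, List.length_tail, List.length_drop]
        omega
      obtain ⟨l'', hw'', hnd'', hc''⟩ := ih _ hlen' _ rfl hwalk'
      exact ⟨l'', hw'', hnd'', hc''.trans hcost_le⟩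


lemma exists_walk_of_ne_top (h : gdist E W u v ≠ ⊤) : ∃ l, IsWalk E u v l := by
  by_contra hc
  push_neg at hc
  exact h (by simp [gdist, hc])

lemma one_le_gdist (hW1 : ∀ e ∈ E, 1 ≤ W e) (huv : u ≠ v) :
    ENNReal.ofReal 1 ≤ gdist E W u v :=
  le_iInf₂ fun _ hl => one_le_walkCost hW1 huv hl

lemma exists_edge_of_walk (huv : u ≠ v) {l : List V} (h : IsWalk E u v l) :
    ∃ a b, (a, b) ∈ E := by
  obtain ⟨hc, hh, hl⟩ := h
  match l with
  | [] => simp at hh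
  | [a] =>
    simp only [List.head?_cons, Option.some.injEq] at hh
    simp only [List.getLast?_singleton, Option.some.injEq] at hl
    exact absurd (hh.symm.trans hl) huv
  | a :: b :: t => exact ⟨a, b, (List.isChain_cons_cons.mp hc).1⟩

end Helpers

/-- **From round-trip covers to a round-trip spanner.**
Given, for each scale `i = 1, …, L = ⌈log₂ (2 n w)⌉`, an `S`-sourcewise
`(β, 2^i)`-cover `𝒞 i` of `G` with centers `x B`, any subgraph `H = (V, F, W)`
realizing the induced center-to-vertex and vertex-to-center distances of every
ball is an `S`-sourcewise `4β`-roundtrip spanner of `G`.  Moreover, the union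
of round-trip (out- and in-) shortest-path trees of all balls has at most
`2 * μ * n * L` edges whenever every vertex lies in at most `μ` balls of each
cover. -/
theorem cover_union_is_sourcewise_spanner
    {V : Type} [Fintype V] [DecidableEq V]
    (E : Finset (V × V)) (W : V × V → ℝ) (w : ℝ)
    (hW : ∀ e ∈ E, 1 ≤ W e ∧ W e ≤ w)
    (hn : 2 ≤ Fintype.card V)
    (S : Finset V) (β : ℝ) (hβ : 1 ≤ β)
    (L : ℕ) (hL : (L : ℤ) = ⌈Real.logb 2 (2 * (Fintype.card V : ℝ) * w)⌉)
    (𝒞 : ℕ → Finset (Finset V)) (x : Finset V → V)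
    (hcenter : ∀ i ∈ Finset.Icc 1 L, ∀ B ∈ 𝒞 i, x B ∈ B ∧
      ∀ y ∈ B, inducedRtdist (↑E) W (↑B) (x B) y ≤ ENNReal.ofReal (β * 2 ^ i))
    (hcover : ∀ i ∈ Finset.Icc 1 L, ∀ u ∈ S, ∀ v : V,
      rtdist (↑E) W u v ≤ ENNReal.ofReal (2 ^ i) → ∃ B ∈ 𝒞 i, u ∈ B ∧ v ∈ B) :
    -- Any subgraph realizing the ball distances is a sourcewise 4β-spanner.
    (∀ F : Finset (V × V), F ⊆ E →
      (∀ i ∈ Finset.Icc 1 L, ∀ B ∈ 𝒞 i, ∀ y ∈ B,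
        gdist (↑F) W (x B) y ≤ inducedGdist (↑E) W (↑B) (x B) y ∧
        gdist (↑F) W y (x B) ≤ inducedGdist (↑E) W (↑B) y (x B)) →
      ∀ u ∈ S, ∀ v : V,
        rtdist (↑F) W u v ≤ ENNReal.ofReal (4 * β) * rtdist (↑E) W u v) ∧
    -- The union of the round-trip trees of the balls has ≤ 2 μ n L edges.
    (∀ (outT inT : ℕ → Finset V → Finset (V × V)) (μ : ℕ),
      (∀ i ∈ Finset.Icc 1 L, ∀ B ∈ 𝒞 i,
        IsSPOutTree E W B (x B) (outT i B) ∧ IsSPInTree E W B (x B) (inT i B)) →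
      (∀ v : V, ∀ i ∈ Finset.Icc 1 L,
        ((𝒞 i).filter (fun B => v ∈ B)).card ≤ μ) →
      ((Finset.Icc 1 L).biUnion
          (fun i => (𝒞 i).biUnion (fun B => outT i B ∪ inT i B))).card ≤
        2 * μ * Fintype.card V * L) := by
  constructor
  · -- Part 1: spanner property
    intro F hFE hF u hu v
    by_cases huv : u = v
    · subst huv
      simp [rtdist, gdist_self]
    by_cases hfin : rtdist (↑E) W u v = ⊤
    · rw [hfin, ENNReal.mul_top (by
        simp only [ne_eq, ENNReal.ofReal_eq_zero, not_le]
        nlinarith)]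
      exact le_top
    have hgud : gdist (↑E : Set (V × V)) W u v ≠ ⊤ := fun h => hfin (by simp [rtdist, h])
    have hgvu : gdist (↑E : Set (V × V)) W v u ≠ ⊤ := fun h => hfin (by simp [rtdist, h])
    have hW1 : ∀ e ∈ (↑E : Set (V × V)), 1 ≤ W e := fun e he => (hW e (Finset.mem_coe.mp he)).1
    have hWw : ∀ e ∈ (↑E : Set (V × V)), W e ≤ w := fun e he => (hW e (Finset.mem_coe.mp he)).2
    obtain ⟨l₁, hl₁⟩ := exists_walk_of_ne_top hgud
    have hw1 : (1 : ℝ) ≤ w := by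
      obtain ⟨a, b, hab⟩ := exists_edge_of_walk huv hl₁
      have h := hW (a, b) (Finset.mem_coe.mp hab)
      linarith [h.1, h.2]
    have hw0 : (0 : ℝ) ≤ w := by linarith
    set nV := Fintype.card V with hnV
    have hub : ∀ a b : V, gdist (↑E : Set (V × V)) W a b ≠ ⊤ →
        gdist (↑E : Set (V × V)) W a b ≤ ENNReal.ofReal (((nV : ℝ) - 1) * w) := by
      intro a b hne
      obtain ⟨l, hl⟩ := exists_walk_of_ne_top hne
      obtain ⟨l', hl', hnd, _⟩ := exists_nodup_walk (W := W) l.length l rfl hl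
      have hlen : l'.length ≤ nV := hnd.length_le_card
      calc gdist (↑E : Set (V × V)) W a b ≤ walkCost W l' := gdist_le hl'
        _ ≤ ENNReal.ofReal ((l'.length - 1 : ℕ) * w) := walkCost_le_of_chain hw0 hWw l' hl'.1
        _ ≤ _ := by
            apply ENNReal.ofReal_le_ofReal
            apply mul_le_mul_of_nonneg_right _ hw0
            have : ((l'.length - 1 : ℕ) : ℝ) ≤ (l'.length : ℝ) - 1 ∨ l'.length = 0 := by
              rcases Nat.eq_zero_or_pos l'.length with h | h
              · exact Or.inr h
              · left; push_cast [Nat.cast_sub h]; ring_nf; exact le_rfl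
            rcases this with h | h
            · have : (l'.length : ℝ) ≤ (nV : ℝ) := by exact_mod_cast hlen
              linarith
            · simp [h]
              linarith [show (2:ℝ) ≤ (nV:ℝ) by exact_mod_cast hn]
    have hr_ub : rtdist (↑E) W u v ≤ ENNReal.ofReal (2 * (nV : ℝ) * w) := by
      have h1 := hub u v hgud
      have h2 := hub v u hgvu
      calc rtdist (↑E) W u v
          ≤ ENNReal.ofReal (((nV : ℝ) - 1) * w) + ENNReal.ofReal (((nV : ℝ) - 1) * w) :=
            add_le_add h1 h2
        _ = ENNReal.ofReal (((nV : ℝ) - 1) * w + ((nV : ℝ) - 1) * w) := by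
            rw [ENNReal.ofReal_add] <;>
              nlinarith [show (2:ℝ) ≤ (nV:ℝ) by exact_mod_cast hn]
        _ ≤ _ := by
            apply ENNReal.ofReal_le_ofReal
            nlinarith [show (2:ℝ) ≤ (nV:ℝ) by exact_mod_cast hn]
    have hr_lb : ENNReal.ofReal 2 ≤ rtdist (↑E) W u v := by
      have h1 := one_le_gdist (W := W) hW1 huv
      have h2 := one_le_gdist (W := W) hW1 (Ne.symm huv)
      calc ENNReal.ofReal 2 = ENNReal.ofReal 1 + ENNReal.ofReal 1 := by
            rw [← ENNReal.ofReal_add] <;> norm_num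
        _ ≤ _ := add_le_add h1 h2
    set t := (rtdist (↑E) W u v).toReal with ht
    have hrofreal : ENNReal.ofReal t = rtdist (↑E) W u v := ENNReal.ofReal_toReal hfin
    have ht2 : 2 ≤ t := (ENNReal.ofReal_le_iff_le_toReal hfin).mp hr_lb
    have ht0 : 0 < t := by linarith
    have htub : t ≤ 2 * (nV : ℝ) * w :=
      ENNReal.toReal_le_of_le_ofReal
        (by positivity) hr_ub
    set x0 := Real.logb 2 t with hx0
    have hx1 : (1 : ℝ) ≤ x0 := by
      have := Real.logb_le_logb_of_le (one_lt_two) (two_pos) ht2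
      rwa [Real.logb_self_eq_one one_lt_two] at this
    set iZ := ⌈x0⌉ with hiZ
    have hiZ1 : 1 ≤ iZ := by
      have h := Int.le_ceil x0
      have : (1 : ℝ) ≤ (iZ : ℝ) := by linarith
      exact_mod_cast this
    set i := iZ.toNat with hidef
    have hiN : ((i : ℕ) : ℝ) = (iZ : ℝ) := by
      rw [hidef]
      exact_mod_cast congrArg (Int.cast : ℤ → ℝ) (Int.toNat_of_nonneg (by omega))
    have hi1 : 1 ≤ i := by omega
    have hiL : i ≤ L := by
      have hceil : iZ ≤ ⌈Real.logb 2 (2 * (nV : ℝ) * w)⌉ :=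
        Int.ceil_le_ceil (Real.logb_le_logb_of_le one_lt_two ht0 htub)
      have : iZ ≤ (L : ℤ) := by rw [hL]; exact hceil
      omega
    have hmemIcc : i ∈ Finset.Icc 1 L := Finset.mem_Icc.mpr ⟨hi1, hiL⟩
    have h2it : t ≤ (2 : ℝ) ^ i := by
      have heq : t = (2 : ℝ) ^ x0 := (Real.rpow_logb two_pos (by norm_num) ht0).symm
      rw [heq, ← Real.rpow_natCast 2 i]
      exact Real.rpow_le_rpow_of_exponent_le one_le_two (by rw [hiN]; exact Int.le_ceil x0)
    have h2i2t : (2 : ℝ) ^ i ≤ 2 * t := by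
      rw [← Real.rpow_natCast 2 i]
      calc (2 : ℝ) ^ (i : ℝ) ≤ 2 ^ (x0 + 1) :=
            Real.rpow_le_rpow_of_exponent_le one_le_two
              (by rw [hiN]; linarith [Int.ceil_lt_add_one x0])
        _ = 2 ^ x0 * 2 ^ (1 : ℝ) := Real.rpow_add two_pos _ _
        _ = 2 * t := by
            rw [Real.rpow_one, Real.rpow_logb two_pos (by norm_num) ht0]; ring
    obtain ⟨B, hB, huB, hvB⟩ := hcover i hmemIcc u hu v
      (by rw [← hrofreal]; exact ENNReal.ofReal_le_ofReal h2it)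
    obtain ⟨hxB, hrtB⟩ := hcenter i hmemIcc B hB
    have hFu := hF i hmemIcc B hB u huB
    have hFv := hF i hmemIcc B hB v hvB
    have hrtu := hrtB u huB
    have hrtv := hrtB v hvB
    have key : rtdist (↑F) W u v ≤ ENNReal.ofReal (β * 2 ^ i) + ENNReal.ofReal (β * 2 ^ i) := by
      calc rtdist (↑F) W u v = gdist (↑F) W u v + gdist (↑F) W v u := rfl
        _ ≤ (gdist (↑F) W u (x B) + gdist (↑F) W (x B) v) +
            (gdist (↑F) W v (x B) + gdist (↑F) W (x B) u) :=
            add_le_add (gdist_triangle u (x B) v) (gdist_triangle v (x B) u)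
        _ = (gdist (↑F) W (x B) u + gdist (↑F) W u (x B)) +
            (gdist (↑F) W (x B) v + gdist (↑F) W v (x B)) := by ring
        _ ≤ (inducedGdist (↑E) W (↑B) (x B) u + inducedGdist (↑E) W (↑B) u (x B)) +
            (inducedGdist (↑E) W (↑B) (x B) v + inducedGdist (↑E) W (↑B) v (x B)) :=
            add_le_add (add_le_add hFu.1 hFu.2) (add_le_add hFv.1 hFv.2)
        _ ≤ _ := add_le_add hrtu hrtv
    have h2pos : (0 : ℝ) < 2 ^ i := by positivity
    calc rtdist (↑F) W u v ≤ ENNReal.ofReal (β * 2 ^ i) + ENNReal.ofReal (β * 2 ^ i) := key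
      _ = ENNReal.ofReal (β * 2 ^ i + β * 2 ^ i) := by
          rw [ENNReal.ofReal_add] <;> nlinarith
      _ ≤ ENNReal.ofReal (4 * β * t) := by
          apply ENNReal.ofReal_le_ofReal
          nlinarith
      _ = ENNReal.ofReal (4 * β) * ENNReal.ofReal t := ENNReal.ofReal_mul (by linarith)
      _ = ENNReal.ofReal (4 * β) * rtdist (↑E) W u v := by rw [hrofreal]
  · -- Part 2: counting
    intro outT inT μ htree hmu
    have hball : ∀ i ∈ Finset.Icc 1 L, ∀ B ∈ 𝒞 i,
        (outT i B ∪ inT i B).card ≤ 2 * B.card := by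
      intro i hi B hB
      obtain ⟨hOut, hIn⟩ := htree i hi B hB
      have h1 : (outT i B).card ≤ B.card := by
        refine Finset.card_le_card_of_injOn Prod.snd
          (fun e he => (Finset.mem_filter.mp (hOut.1 he)).2.2) ?_
        intro e1 he1 e2 he2 hsnd
        have hc := hOut.2.1 e2.2
        rw [Finset.card_le_one] at hc
        exact hc _ (Finset.mem_filter.mpr ⟨Finset.mem_coe.mp he1, hsnd⟩) _
          (Finset.mem_filter.mpr ⟨Finset.mem_coe.mp he2, rfl⟩)
      have h2 : (inT i B).card ≤ B.card := by
        refine Finset.card_le_card_of_injOn Prod.fst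
          (fun e he => (Finset.mem_filter.mp (hIn.1 he)).2.1) ?_
        intro e1 he1 e2 he2 hfst
        have hc := hIn.2.1 e2.1
        rw [Finset.card_le_one] at hc
        exact hc _ (Finset.mem_filter.mpr ⟨Finset.mem_coe.mp he1, hfst⟩) _
          (Finset.mem_filter.mpr ⟨Finset.mem_coe.mp he2, rfl⟩)
      calc (outT i B ∪ inT i B).card ≤ (outT i B).card + (inT i B).card :=
            Finset.card_union_le _ _
        _ ≤ 2 * B.card := by omega
    have hdouble : ∀ i ∈ Finset.Icc 1 L, ∑ B ∈ 𝒞 i, B.card ≤ μ * Fintype.card V := by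
      intro i hi
      have hswap : ∑ B ∈ 𝒞 i, B.card
          = ∑ v : V, ((𝒞 i).filter (fun B => v ∈ B)).card := by
        calc ∑ B ∈ 𝒞 i, B.card
            = ∑ B ∈ 𝒞 i, ∑ v : V, if v ∈ B then 1 else 0 := by
              refine Finset.sum_congr rfl fun B _ => ?_
              rw [← Finset.card_filter, Finset.filter_univ_mem]
          _ = ∑ v : V, ∑ B ∈ 𝒞 i, if v ∈ B then 1 else 0 := Finset.sum_comm
          _ = _ := by
              refine Finset.sum_congr rfl fun v _ => ?_
              rw [Finset.card_filter]
      rw [hswap]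
      calc ∑ v : V, ((𝒞 i).filter (fun B => v ∈ B)).card
          ≤ ∑ _v : V, μ := Finset.sum_le_sum fun v _ => hmu v i hi
        _ = Fintype.card V * μ := by rw [Finset.sum_const, Finset.card_univ, smul_eq_mul]
        _ = μ * Fintype.card V := mul_comm _ _
    calc ((Finset.Icc 1 L).biUnion
          (fun i => (𝒞 i).biUnion (fun B => outT i B ∪ inT i B))).card
        ≤ ∑ i ∈ Finset.Icc 1 L, ((𝒞 i).biUnion (fun B => outT i B ∪ inT i B)).card :=
          Finset.card_biUnion_le
      _ ≤ ∑ _i ∈ Finset.Icc 1 L, 2 * μ * Fintype.card V := by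
          refine Finset.sum_le_sum fun i hi => ?_
          calc ((𝒞 i).biUnion (fun B => outT i B ∪ inT i B)).card
              ≤ ∑ B ∈ 𝒞 i, (outT i B ∪ inT i B).card := Finset.card_biUnion_le
            _ ≤ ∑ B ∈ 𝒞 i, 2 * B.card := Finset.sum_le_sum fun B hB => hball i hi B hB
            _ = 2 * ∑ B ∈ 𝒞 i, B.card := by rw [Finset.mul_sum]
            _ ≤ 2 * (μ * Fintype.card V) := by
                have := hdouble i hi
                omega
            _ = 2 * μ * Fintype.card V := by ring
      _ = (Finset.Icc 1 L).card * (2 * μ * Fintype.card V) := by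
          rw [Finset.sum_const, smul_eq_mul]
      _ = 2 * μ * Fintype.card V * L := by
          rw [Nat.card_Icc, Nat.add_sub_cancel]
          ring
end
end
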